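/- (Concrete machine refines the abstract machine.) Fix a concrete lattice for 𝓛 and let the concrete machine run the fault handler φ_{𝓡^abs} = genFaultHandler 𝓡^abs. Then (≈ⁱᶜ, ≈ᵉᶜ) is a refinement of the abstract IFC machine into the concrete machine: whenever (p, args, n, L) ≈ⁱᶜ (p, args', n, Tag(L)) and the concrete machine emits trace t₂ from its initial state, the abstract machine emits from its initial state a trace t₁ of equal length with corresponding events ≈ᵉᶜ-related. -/

import Mathlib

/-! ### Generic machines, traces, refinement, observation, TINI -/

/-- A generic machine: states, events, inputs, a step relation (with optional
event; `none` is the silent action τ), and an initialization function. -/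
structure Machine (S E I : Type) where
  step : S → Option E → S → Prop
  init : I → S

/-- `Traces step s t s'`: the machine runs from `s` to `s'` emitting the
(non-silent) events collected in the list `t`. -/
inductive Traces {S E : Type} (step : S → Option E → S → Prop) : S → List E → S → Prop
  | nil (s : S) : Traces step s [] s
  | event {s₁ s₂ s₃ : S} {e : E} {t : List E} :
      step s₁ (some e) s₂ → Traces step s₂ t s₃ → Traces step s₁ (e :: t) s₃
  | silent {s₁ s₂ s₃ : S} {t : List E} :
      step s₁ none s₂ → Traces step s₂ t s₃ → Traces step s₁ t s₃

/-- `Emits step s t`: from `s` the machine can emit the trace `t`. -/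
def Emits {S E : Type} (step : S → Option E → S → Prop) (s : S) (t : List E) : Prop :=
  ∃ s', Traces step s t s'

/-- Refinement of `M₁` into `M₂` via relations on inputs and events. -/
def Refinement {S₁ E₁ I₁ S₂ E₂ I₂ : Type} (M₁ : Machine S₁ E₁ I₁) (M₂ : Machine S₂ E₂ I₂)
    (Ri : I₁ → I₂ → Prop) (Re : E₁ → E₂ → Prop) : Prop :=
  ∀ i₁ i₂ t₂, Ri i₁ i₂ → Emits M₂.step (M₂.init i₂) t₂ →
    ∃ t₁, Emits M₁.step (M₁.init i₁) t₁ ∧ List.Forall₂ Re t₁ t₂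

/-- Refinement via states. -/
def StateRefinement {S₁ E₁ I₁ S₂ E₂ I₂ : Type} (M₁ : Machine S₁ E₁ I₁) (M₂ : Machine S₂ E₂ I₂)
    (Rs : S₁ → S₂ → Prop) (Re : E₁ → E₂ → Prop) : Prop :=
  ∀ s₁ s₂ t₂, Rs s₁ s₂ → Emits M₂.step s₂ t₂ →
    ∃ t₁, Emits M₁.step s₁ t₁ ∧ List.Forall₂ Re t₁ t₂

open Classical in
/-- Filter the unobservable events out of a trace. -/
noncomputable def filterObs {E : Type} (obs : E → Prop) : List E → List E
  | [] => []
  | e :: t => if obs e then e :: filterObs obs t else filterObs obs t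

/-- Indistinguishability of traces: pairwise equal up to the length of the shorter. -/
inductive IndistTrace {E : Type} : List E → List E → Prop
  | nilL (t : List E) : IndistTrace [] t
  | nilR (t : List E) : IndistTrace t []
  | cons (e : E) {t₁ t₂ : List E} : IndistTrace t₁ t₂ → IndistTrace (e :: t₁) (e :: t₂)

/-- Observability of actions: silent actions are never observable. -/
def ObsAct {E : Type} (obs : E → Prop) (α : Option E) : Prop :=
  ∃ e, α = some e ∧ obs e

/-- Indistinguishability of actions: equal, or both unobservable. -/
def ActIndist {E : Type} (obs : E → Prop) (α₁ α₂ : Option E) : Prop :=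
  α₁ = α₂ ∨ (¬ ObsAct obs α₁ ∧ ¬ ObsAct obs α₂)

/-- Indistinguishability of events: equal, or both unobservable. -/
def EvIndist {E : Type} (obs : E → Prop) (e₁ e₂ : E) : Prop :=
  e₁ = e₂ ∨ (¬ obs e₁ ∧ ¬ obs e₂)

/-- Termination-insensitive noninterference for a machine with a notion of
observation `(Ω, obsE, indistI)`. -/
def TINI {S E I Ω : Type} (M : Machine S E I)
    (obsE : Ω → E → Prop) (indistI : Ω → I → I → Prop) : Prop :=
  ∀ o i₁ i₂ t₁ t₂, indistI o i₁ i₂ →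
    Emits M.step (M.init i₁) t₁ → Emits M.step (M.init i₂) t₂ →
    IndistTrace (filterObs (obsE o) t₁) (filterObs (obsE o) t₂)

/-! ### The abstract IFC machine -/

/-- Labeled atoms: an integer payload together with an IFC label. -/
structure Atom (L : Type) where
  val : ℤ
  lab : L

/-- The instruction set (shared by all machines). -/
inductive Instr : Type where
  | add
  | push (m : ℤ)
  | load
  | store
  | jump
  | bnz (k : ℤ)
  | call
  | ret
  | output

/-- Instruction memories. -/
abbrev InstrMem : Type := ℤ → Option Instr

/-- Stack elements: data atoms or return frames. -/
inductive StkElt (L : Type) : Type where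
  | data : Atom L → StkElt L
  | ret : Atom L → StkElt L

/-- Abstract machine states: data memory, stack, program counter. -/
structure AState (L : Type) where
  mem : ℤ → Option (Atom L)
  stk : List (StkElt L)
  pc : Atom L

/-- Memory update. -/
def updMem {L : Type} (μ : ℤ → Option (Atom L)) (p : ℤ) (a : Atom L) :
    ℤ → Option (Atom L) :=
  fun q => if q = p then some a else μ q

section Abstract

variable {L : Type} [SemilatticeSup L] [OrderBot L]

/-- The step relation of the abstract IFC machine, with fixed instruction
memory `ι`.  Actions are `Option (Atom L)`: `none` is silent, `some a` emits
the event `a`. -/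
inductive AStep (ι : InstrMem) : AState L → Option (Atom L) → AState L → Prop
  | add {μ : ℤ → Option (Atom L)} {σ : List (StkElt L)} {n n₁ n₂ : ℤ} {Lpc L₁ L₂ : L} :
      ι n = some .add →
      AStep ι ⟨μ, .data ⟨n₁, L₁⟩ :: .data ⟨n₂, L₂⟩ :: σ, ⟨n, Lpc⟩⟩ none
              ⟨μ, .data ⟨n₁ + n₂, L₁ ⊔ L₂⟩ :: σ, ⟨n + 1, Lpc⟩⟩
  | push {μ : ℤ → Option (Atom L)} {σ : List (StkElt L)} {n m : ℤ} {Lpc : L} :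
      ι n = some (.push m) →
      AStep ι ⟨μ, σ, ⟨n, Lpc⟩⟩ none ⟨μ, .data ⟨m, ⊥⟩ :: σ, ⟨n + 1, Lpc⟩⟩
  | load {μ : ℤ → Option (Atom L)} {σ : List (StkElt L)} {n p m : ℤ} {Lpc L₁ L₂ : L} :
      ι n = some .load → μ p = some ⟨m, L₂⟩ →
      AStep ι ⟨μ, .data ⟨p, L₁⟩ :: σ, ⟨n, Lpc⟩⟩ none
              ⟨μ, .data ⟨m, L₁ ⊔ L₂⟩ :: σ, ⟨n + 1, Lpc⟩⟩
  | store {μ : ℤ → Option (Atom L)} {σ : List (StkElt L)} {n p m k : ℤ}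
      {Lpc L₁ L₂ L₃ : L} :
      ι n = some .store → μ p = some ⟨k, L₃⟩ → L₁ ⊔ Lpc ≤ L₃ →
      AStep ι ⟨μ, .data ⟨p, L₁⟩ :: .data ⟨m, L₂⟩ :: σ, ⟨n, Lpc⟩⟩ none
              ⟨updMem μ p ⟨m, L₁ ⊔ L₂ ⊔ Lpc⟩, σ, ⟨n + 1, Lpc⟩⟩
  | jump {μ : ℤ → Option (Atom L)} {σ : List (StkElt L)} {n n' : ℤ} {Lpc L₁ : L} :
      ι n = some .jump →
      AStep ι ⟨μ, .data ⟨n', L₁⟩ :: σ, ⟨n, Lpc⟩⟩ none ⟨μ, σ, ⟨n', L₁ ⊔ Lpc⟩⟩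
  | bnz {μ : ℤ → Option (Atom L)} {σ : List (StkElt L)} {n m k : ℤ} {Lpc L₁ : L} :
      ι n = some (.bnz k) →
      AStep ι ⟨μ, .data ⟨m, L₁⟩ :: σ, ⟨n, Lpc⟩⟩ none
              ⟨μ, σ, ⟨n + (if m = 0 then 1 else k), L₁ ⊔ Lpc⟩⟩
  | call {μ : ℤ → Option (Atom L)} {σ : List (StkElt L)} {n n' : ℤ} {Lpc L₁ : L} :
      ι n = some .call →
      AStep ι ⟨μ, .data ⟨n', L₁⟩ :: σ, ⟨n, Lpc⟩⟩ none
              ⟨μ, .ret ⟨n + 1, Lpc⟩ :: σ, ⟨n', L₁ ⊔ Lpc⟩⟩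
  | ret {μ : ℤ → Option (Atom L)} {σ : List (StkElt L)} {n : ℤ} {Lpc : L} {pc' : Atom L} :
      ι n = some .ret →
      AStep ι ⟨μ, .ret pc' :: σ, ⟨n, Lpc⟩⟩ none ⟨μ, σ, pc'⟩
  | output {μ : ℤ → Option (Atom L)} {σ : List (StkElt L)} {n m : ℤ} {Lpc L₁ : L} :
      ι n = some .output →
      AStep ι ⟨μ, .data ⟨m, L₁⟩ :: σ, ⟨n, Lpc⟩⟩ (some ⟨m, L₁ ⊔ Lpc⟩)
              ⟨μ, σ, ⟨n + 1, Lpc⟩⟩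

/-- Indistinguishability of atoms at observer `o`: equal, or both unobservable. -/
def AtomIndist (o : L) (a₁ a₂ : Atom L) : Prop :=
  a₁ = a₂ ∨ (¬ a₁.lab ≤ o ∧ ¬ a₂.lab ≤ o)

/-- Pointwise indistinguishability of memories. -/
def MemIndist (o : L) (μ₁ μ₂ : ℤ → Option (Atom L)) : Prop :=
  ∀ p, Option.Rel (AtomIndist o) (μ₁ p) (μ₂ p)

/-- Indistinguishability of stack elements: data matches data, return frames
match return frames, componentwise. -/
inductive EltIndist (o : L) : StkElt L → StkElt L → Prop
  | data {a₁ a₂ : Atom L} : AtomIndist o a₁ a₂ → EltIndist o (.data a₁) (.data a₂)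
  | ret {a₁ a₂ : Atom L} : AtomIndist o a₁ a₂ → EltIndist o (.ret a₁) (.ret a₂)

open Classical in
/-- Stack filtering: drop data atoms and unobservable return frames, keeping the
whole remaining stack at the first observable return frame. -/
noncomputable def stkFilter (o : L) : List (StkElt L) → List (StkElt L)
  | [] => []
  | .data _ :: σ => stkFilter o σ
  | .ret a :: σ => if a.lab ≤ o then .ret a :: σ else stkFilter o σ

/-- A state is observable when the label of its pc flows to the observer. -/
def StateObs (o : L) (s : AState L) : Prop := s.pc.lab ≤ o

/-- Indistinguishability of abstract machine states. -/
def StateIndist (o : L) (s₁ s₂ : AState L) : Prop :=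
  (s₁.pc.lab ≤ o ∧ s₂.pc.lab ≤ o ∧ s₁.pc = s₂.pc ∧
    List.Forall₂ (EltIndist o) s₁.stk s₂.stk ∧ MemIndist o s₁.mem s₂.mem) ∨
  (¬ s₁.pc.lab ≤ o ∧ ¬ s₂.pc.lab ≤ o ∧ MemIndist o s₁.mem s₂.mem ∧
    List.Forall₂ (EltIndist o) (stkFilter o s₁.stk) (stkFilter o s₂.stk))

/-- Input data for the abstract machine: program, initial stack of atoms,
memory size, initial label. -/
structure AInput (L : Type) where
  prog : InstrMem
  args : List (Atom L)
  size : ℕ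
  lab : L

/-- Initial state for the abstract machine: the program is loaded as the
instruction memory, the memory consists of `size` copies of `0 @ lab`, the
stack holds the arguments, and the pc is `0 @ lab`. -/
def aInit (i : AInput L) : InstrMem × AState L :=
  (i.prog,
   ⟨fun q => if 0 ≤ q ∧ q < (i.size : ℤ) then some ⟨0, i.lab⟩ else none,
    i.args.map .data, ⟨0, i.lab⟩⟩)

/-- The abstract machine step relation as a generic machine step (the fixed
instruction memory is part of the state and is preserved). -/
def AStepP : (InstrMem × AState L) → Option (Atom L) → (InstrMem × AState L) → Prop :=
  fun s α s' => s'.1 = s.1 ∧ AStep s.1 s.2 α s'.2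

/-- Indistinguishability of abstract inputs: same program, memory size and
initial label, pointwise indistinguishable argument lists. -/
def AInputIndist (o : L) (i₁ i₂ : AInput L) : Prop :=
  i₁.prog = i₂.prog ∧ i₁.size = i₂.size ∧ i₁.lab = i₂.lab ∧
  List.Forall₂ (AtomIndist o) i₁.args i₂.args

/-- The abstract IFC machine as a generic machine. -/
def AMachine (L : Type) [SemilatticeSup L] [OrderBot L] :
    Machine (InstrMem × AState L) (Atom L) (AInput L) :=
  ⟨AStepP, aInit⟩

end Abstract

/-! ### The symbolic IFC rule machine -/

/-- Instruction opcodes. -/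
inductive Opcode : Type where
  | add | push | load | store | jump | bnz | call | ret | output
deriving DecidableEq

/-- Label expressions of the symbolic IFC rule DSL. -/
inductive LExpr : Type where
  | bot
  | labPC
  | lab1
  | lab2
  | lab3
  | join : LExpr → LExpr → LExpr

/-- Boolean expressions of the symbolic IFC rule DSL. -/
inductive BExpr : Type where
  | tru
  | flows : LExpr → LExpr → BExpr

/-- A symbolic IFC rule: an allow condition, an expression for the label of the
next pc, and an expression for the label of the result. -/
structure SRule : Type where
  allow : BExpr
  rpc : LExpr
  res : LExpr

/-- A symbolic IFC rule table assigns a rule to every opcode. -/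
abbrev RuleTable : Type := Opcode → SRule

section Symbolic

variable {L : Type} [SemilatticeSup L] [OrderBot L]

/-- Evaluation of label expressions at an input tuple `ρ = (L_pc, ℓ₁, ℓ₂, ℓ₃)`. -/
def evalL (ρ : L × L × L × L) : LExpr → L
  | .bot => ⊥
  | .labPC => ρ.1
  | .lab1 => ρ.2.1
  | .lab2 => ρ.2.2.1
  | .lab3 => ρ.2.2.2
  | .join e₁ e₂ => evalL ρ e₁ ⊔ evalL ρ e₂

/-- Evaluation of boolean expressions. -/
def evalB (ρ : L × L × L × L) : BExpr → Prop
  | .tru => True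
  | .flows e₁ e₂ => evalL ρ e₁ ≤ evalL ρ e₂

/-- The IFC enforcement judgment `⊢_𝓡 ρ ⇝_op ⟨L_rpc, L_r⟩`. -/
def Judge (R : RuleTable) (ρ : L × L × L × L) (op : Opcode) (Lrpc Lr : L) : Prop :=
  evalB ρ (R op).allow ∧ evalL ρ (R op).rpc = Lrpc ∧ evalL ρ (R op).res = Lr

/-- The step relation of the symbolic rule machine, parameterized by a rule
table `R` and a fixed instruction memory `ι`. -/
inductive QStep (R : RuleTable) (ι : InstrMem) :
    AState L → Option (Atom L) → AState L → Prop
  | add {μ : ℤ → Option (Atom L)} {σ : List (StkElt L)} {n n₁ n₂ : ℤ}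
      {Lpc L₁ L₂ Lrpc Lr : L} :
      ι n = some .add → Judge R (Lpc, L₁, L₂, ⊥) .add Lrpc Lr →
      QStep R ι ⟨μ, .data ⟨n₁, L₁⟩ :: .data ⟨n₂, L₂⟩ :: σ, ⟨n, Lpc⟩⟩ none
                ⟨μ, .data ⟨n₁ + n₂, Lr⟩ :: σ, ⟨n + 1, Lrpc⟩⟩
  | push {μ : ℤ → Option (Atom L)} {σ : List (StkElt L)} {n m : ℤ} {Lpc Lrpc Lr : L} :
      ι n = some (.push m) → Judge R (Lpc, ⊥, ⊥, ⊥) .push Lrpc Lr →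
      QStep R ι ⟨μ, σ, ⟨n, Lpc⟩⟩ none ⟨μ, .data ⟨m, Lr⟩ :: σ, ⟨n + 1, Lrpc⟩⟩
  | load {μ : ℤ → Option (Atom L)} {σ : List (StkElt L)} {n p m : ℤ}
      {Lpc L₁ L₂ Lrpc Lr : L} :
      ι n = some .load → μ p = some ⟨m, L₂⟩ →
      Judge R (Lpc, L₁, L₂, ⊥) .load Lrpc Lr →
      QStep R ι ⟨μ, .data ⟨p, L₁⟩ :: σ, ⟨n, Lpc⟩⟩ none
                ⟨μ, .data ⟨m, Lr⟩ :: σ, ⟨n + 1, Lrpc⟩⟩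
  | store {μ : ℤ → Option (Atom L)} {σ : List (StkElt L)} {n p m k : ℤ}
      {Lpc L₁ L₂ L₃ Lrpc Lr : L} :
      ι n = some .store → μ p = some ⟨k, L₃⟩ →
      Judge R (Lpc, L₁, L₂, L₃) .store Lrpc Lr →
      QStep R ι ⟨μ, .data ⟨p, L₁⟩ :: .data ⟨m, L₂⟩ :: σ, ⟨n, Lpc⟩⟩ none
                ⟨updMem μ p ⟨m, Lr⟩, σ, ⟨n + 1, Lrpc⟩⟩
  | jump {μ : ℤ → Option (Atom L)} {σ : List (StkElt L)} {n n' : ℤ}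
      {Lpc L₁ Lrpc Lr : L} :
      ι n = some .jump → Judge R (Lpc, L₁, ⊥, ⊥) .jump Lrpc Lr →
      QStep R ι ⟨μ, .data ⟨n', L₁⟩ :: σ, ⟨n, Lpc⟩⟩ none ⟨μ, σ, ⟨n', Lrpc⟩⟩
  | bnz {μ : ℤ → Option (Atom L)} {σ : List (StkElt L)} {n m k : ℤ}
      {Lpc L₁ Lrpc Lr : L} :
      ι n = some (.bnz k) → Judge R (Lpc, L₁, ⊥, ⊥) .bnz Lrpc Lr →
      QStep R ι ⟨μ, .data ⟨m, L₁⟩ :: σ, ⟨n, Lpc⟩⟩ none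
                ⟨μ, σ, ⟨n + (if m = 0 then 1 else k), Lrpc⟩⟩
  | call {μ : ℤ → Option (Atom L)} {σ : List (StkElt L)} {n n' : ℤ}
      {Lpc L₁ Lrpc Lr : L} :
      ι n = some .call → Judge R (Lpc, L₁, ⊥, ⊥) .call Lrpc Lr →
      QStep R ι ⟨μ, .data ⟨n', L₁⟩ :: σ, ⟨n, Lpc⟩⟩ none
                ⟨μ, .ret ⟨n + 1, Lr⟩ :: σ, ⟨n', Lrpc⟩⟩
  | ret {μ : ℤ → Option (Atom L)} {σ : List (StkElt L)} {n m : ℤ}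
      {Lpc L₁ Lrpc Lr : L} :
      ι n = some .ret → Judge R (Lpc, L₁, ⊥, ⊥) .ret Lrpc Lr →
      QStep R ι ⟨μ, .ret ⟨m, L₁⟩ :: σ, ⟨n, Lpc⟩⟩ none ⟨μ, σ, ⟨m, Lrpc⟩⟩
  | output {μ : ℤ → Option (Atom L)} {σ : List (StkElt L)} {n m : ℤ}
      {Lpc L₁ Lrpc Lr : L} :
      ι n = some .output → Judge R (Lpc, L₁, ⊥, ⊥) .output Lrpc Lr →
      QStep R ι ⟨μ, .data ⟨m, L₁⟩ :: σ, ⟨n, Lpc⟩⟩ (some ⟨m, Lr⟩)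
                ⟨μ, σ, ⟨n + 1, Lrpc⟩⟩

/-- The symbolic rule machine step relation as a generic machine step (the
instruction memory is part of the state and preserved). -/
def QStepP (R : RuleTable) :
    (InstrMem × AState L) → Option (Atom L) → (InstrMem × AState L) → Prop :=
  fun s α s' => s'.1 = s.1 ∧ QStep R s.1 s.2 α s'.2

end Symbolic

/-- The rule table `𝓡^abs` corresponding to the IFC mechanism of the abstract
machine. -/
def RabsTable : RuleTable
  | .add => ⟨.tru, .labPC, .join .lab1 .lab2⟩
  | .output => ⟨.tru, .labPC, .join .lab1 .labPC⟩
  | .push => ⟨.tru, .labPC, .bot⟩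
  | .load => ⟨.tru, .labPC, .join .lab1 .lab2⟩
  | .store => ⟨.flows (.join .lab1 .labPC) .lab3, .labPC, .join (.join .lab1 .lab2) .labPC⟩
  | .jump => ⟨.tru, .join .lab1 .labPC, .bot⟩
  | .bnz => ⟨.tru, .join .lab1 .labPC, .bot⟩
  | .call => ⟨.tru, .join .lab1 .labPC, .labPC⟩
  | .ret => ⟨.tru, .lab1, .bot⟩

/-! ### The concrete machine -/

/-- The default tag. -/
def TD : ℤ := -1

/-- Concrete atoms: an integer payload and an integer tag. -/
structure CAtom : Type where
  val : ℤ
  tag : ℤ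
deriving DecidableEq

/-- Concrete stack elements: data atoms, or return frames saving a pc atom and
a privilege bit (`true` = kernel mode). -/
inductive CStkElt : Type where
  | data : CAtom → CStkElt
  | ret : CAtom → Bool → CStkElt

/-- Concrete machine states: privilege bit (`true` = kernel), kernel data
memory (whose first seven cells form the rule cache), user data memory, stack,
and pc. -/
structure CState : Type where
  priv : Bool
  kmem : ℤ → Option CAtom
  umem : ℤ → Option CAtom
  stk : List CStkElt
  pc : CAtom

/-- Concrete memory update. -/
def updC (μ : ℤ → Option CAtom) (p : ℤ) (a : CAtom) : ℤ → Option CAtom :=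
  fun q => if q = p then some a else μ q

/-- Integer encoding of opcodes. -/
def encOp : Opcode → ℤ
  | .add => 0 | .push => 1 | .load => 2 | .store => 3 | .jump => 4
  | .bnz => 5 | .call => 6 | .ret => 7 | .output => 8

/-- The input part of the rule cache holds the given opcode and tags. -/
def cacheIn (κ : ℤ → Option CAtom) (op Tpc T₁ T₂ T₃ : ℤ) : Prop :=
  κ 0 = some ⟨op, TD⟩ ∧ κ 1 = some ⟨Tpc, TD⟩ ∧ κ 2 = some ⟨T₁, TD⟩ ∧
  κ 3 = some ⟨T₂, TD⟩ ∧ κ 4 = some ⟨T₃, TD⟩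

/-- The output part of the rule cache holds the given result tags. -/
def cacheOut (κ : ℤ → Option CAtom) (Trpc Tr : ℤ) : Prop :=
  κ 5 = some ⟨Trpc, TD⟩ ∧ κ 6 = some ⟨Tr, TD⟩

/-- Install a faulting instruction's opcode and tags in the cache input part,
resetting the output part to default tags. -/
def installCache (κ : ℤ → Option CAtom) (op Tpc T₁ T₂ T₃ : ℤ) : ℤ → Option CAtom :=
  fun q =>
    if q = 0 then some ⟨op, TD⟩ else if q = 1 then some ⟨Tpc, TD⟩
    else if q = 2 then some ⟨T₁, TD⟩ else if q = 3 then some ⟨T₂, TD⟩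
    else if q = 4 then some ⟨T₃, TD⟩ else if q = 5 then some ⟨TD, TD⟩
    else if q = 6 then some ⟨TD, TD⟩ else κ q

/-- The step relation of the concrete machine, given a user instruction memory
`ι` and a kernel instruction memory `φ`.  In user mode (`priv = false`) an
instruction either hits in the rule cache and executes with the cached output
tags, or misses, stores its opcode and tags in the cache input, pushes a return
frame, and traps to kernel address 0.  In kernel mode (`priv = true`)
instructions are fetched from `φ`, tags are ignored (`Load`/`Store` preserve the
tag of the datum), `Output` is forbidden, and `Ret` restores the saved pc and
privilege bit. -/
inductive CStep (ι φ : InstrMem) : CState → Option CAtom → CState → Prop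
  -- user mode, cache hit
  | addH {κ μ : ℤ → Option CAtom} {σ : List CStkElt} {n n₁ n₂ Tpc T₁ T₂ Trpc Tr : ℤ} :
      ι n = some .add → cacheIn κ (encOp .add) Tpc T₁ T₂ TD → cacheOut κ Trpc Tr →
      CStep ι φ ⟨false, κ, μ, .data ⟨n₁, T₁⟩ :: .data ⟨n₂, T₂⟩ :: σ, ⟨n, Tpc⟩⟩ none
                ⟨false, κ, μ, .data ⟨n₁ + n₂, Tr⟩ :: σ, ⟨n + 1, Trpc⟩⟩
  | pushH {κ μ : ℤ → Option CAtom} {σ : List CStkElt} {n m Tpc Trpc Tr : ℤ} :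
      ι n = some (.push m) → cacheIn κ (encOp .push) Tpc TD TD TD → cacheOut κ Trpc Tr →
      CStep ι φ ⟨false, κ, μ, σ, ⟨n, Tpc⟩⟩ none
                ⟨false, κ, μ, .data ⟨m, Tr⟩ :: σ, ⟨n + 1, Trpc⟩⟩
  | loadH {κ μ : ℤ → Option CAtom} {σ : List CStkElt} {n p m Tpc T₁ T₂ Trpc Tr : ℤ} :
      ι n = some .load → μ p = some ⟨m, T₂⟩ →
      cacheIn κ (encOp .load) Tpc T₁ T₂ TD → cacheOut κ Trpc Tr →
      CStep ι φ ⟨false, κ, μ, .data ⟨p, T₁⟩ :: σ, ⟨n, Tpc⟩⟩ none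
                ⟨false, κ, μ, .data ⟨m, Tr⟩ :: σ, ⟨n + 1, Trpc⟩⟩
  | storeH {κ μ : ℤ → Option CAtom} {σ : List CStkElt} {n p m k Tpc T₁ T₂ T₃ Trpc Tr : ℤ} :
      ι n = some .store → μ p = some ⟨k, T₃⟩ →
      cacheIn κ (encOp .store) Tpc T₁ T₂ T₃ → cacheOut κ Trpc Tr →
      CStep ι φ ⟨false, κ, μ, .data ⟨p, T₁⟩ :: .data ⟨m, T₂⟩ :: σ, ⟨n, Tpc⟩⟩ none
                ⟨false, κ, updC μ p ⟨m, Tr⟩, σ, ⟨n + 1, Trpc⟩⟩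
  | jumpH {κ μ : ℤ → Option CAtom} {σ : List CStkElt} {n n' Tpc T₁ Trpc Tr : ℤ} :
      ι n = some .jump → cacheIn κ (encOp .jump) Tpc T₁ TD TD → cacheOut κ Trpc Tr →
      CStep ι φ ⟨false, κ, μ, .data ⟨n', T₁⟩ :: σ, ⟨n, Tpc⟩⟩ none
                ⟨false, κ, μ, σ, ⟨n', Trpc⟩⟩
  | bnzH {κ μ : ℤ → Option CAtom} {σ : List CStkElt} {n m k Tpc T₁ Trpc Tr : ℤ} :
      ι n = some (.bnz k) → cacheIn κ (encOp .bnz) Tpc T₁ TD TD → cacheOut κ Trpc Tr →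
      CStep ι φ ⟨false, κ, μ, .data ⟨m, T₁⟩ :: σ, ⟨n, Tpc⟩⟩ none
                ⟨false, κ, μ, σ, ⟨n + (if m = 0 then 1 else k), Trpc⟩⟩
  | callH {κ μ : ℤ → Option CAtom} {σ : List CStkElt} {n n' Tpc T₁ Trpc Tr : ℤ} :
      ι n = some .call → cacheIn κ (encOp .call) Tpc T₁ TD TD → cacheOut κ Trpc Tr →
      CStep ι φ ⟨false, κ, μ, .data ⟨n', T₁⟩ :: σ, ⟨n, Tpc⟩⟩ none
                ⟨false, κ, μ, .ret ⟨n + 1, Tr⟩ false :: σ, ⟨n', Trpc⟩⟩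
  | retH {κ μ : ℤ → Option CAtom} {σ : List CStkElt} {n m Tpc T₁ Trpc Tr : ℤ} :
      ι n = some .ret → cacheIn κ (encOp .ret) Tpc T₁ TD TD → cacheOut κ Trpc Tr →
      CStep ι φ ⟨false, κ, μ, .ret ⟨m, T₁⟩ false :: σ, ⟨n, Tpc⟩⟩ none
                ⟨false, κ, μ, σ, ⟨m, Trpc⟩⟩
  | outputH {κ μ : ℤ → Option CAtom} {σ : List CStkElt} {n m Tpc T₁ Trpc Tr : ℤ} :
      ι n = some .output → cacheIn κ (encOp .output) Tpc T₁ TD TD → cacheOut κ Trpc Tr →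
      CStep ι φ ⟨false, κ, μ, .data ⟨m, T₁⟩ :: σ, ⟨n, Tpc⟩⟩ (some ⟨m, Tr⟩)
                ⟨false, κ, μ, σ, ⟨n + 1, Trpc⟩⟩
  -- user mode, cache miss
  | addM {κ μ : ℤ → Option CAtom} {σ : List CStkElt} {n n₁ n₂ Tpc T₁ T₂ : ℤ} :
      ι n = some .add → ¬ cacheIn κ (encOp .add) Tpc T₁ T₂ TD →
      CStep ι φ ⟨false, κ, μ, .data ⟨n₁, T₁⟩ :: .data ⟨n₂, T₂⟩ :: σ, ⟨n, Tpc⟩⟩ none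
                ⟨true, installCache κ (encOp .add) Tpc T₁ T₂ TD, μ,
                 .ret ⟨n, Tpc⟩ false :: .data ⟨n₁, T₁⟩ :: .data ⟨n₂, T₂⟩ :: σ, ⟨0, TD⟩⟩
  | pushM {κ μ : ℤ → Option CAtom} {σ : List CStkElt} {n m Tpc : ℤ} :
      ι n = some (.push m) → ¬ cacheIn κ (encOp .push) Tpc TD TD TD →
      CStep ι φ ⟨false, κ, μ, σ, ⟨n, Tpc⟩⟩ none
                ⟨true, installCache κ (encOp .push) Tpc TD TD TD, μ,
                 .ret ⟨n, Tpc⟩ false :: σ, ⟨0, TD⟩⟩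
  | loadM {κ μ : ℤ → Option CAtom} {σ : List CStkElt} {n p m Tpc T₁ T₂ : ℤ} :
      ι n = some .load → μ p = some ⟨m, T₂⟩ →
      ¬ cacheIn κ (encOp .load) Tpc T₁ T₂ TD →
      CStep ι φ ⟨false, κ, μ, .data ⟨p, T₁⟩ :: σ, ⟨n, Tpc⟩⟩ none
                ⟨true, installCache κ (encOp .load) Tpc T₁ T₂ TD, μ,
                 .ret ⟨n, Tpc⟩ false :: .data ⟨p, T₁⟩ :: σ, ⟨0, TD⟩⟩
  | storeM {κ μ : ℤ → Option CAtom} {σ : List CStkElt} {n p m k Tpc T₁ T₂ T₃ : ℤ} :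
      ι n = some .store → μ p = some ⟨k, T₃⟩ →
      ¬ cacheIn κ (encOp .store) Tpc T₁ T₂ T₃ →
      CStep ι φ ⟨false, κ, μ, .data ⟨p, T₁⟩ :: .data ⟨m, T₂⟩ :: σ, ⟨n, Tpc⟩⟩ none
                ⟨true, installCache κ (encOp .store) Tpc T₁ T₂ T₃, μ,
                 .ret ⟨n, Tpc⟩ false :: .data ⟨p, T₁⟩ :: .data ⟨m, T₂⟩ :: σ, ⟨0, TD⟩⟩
  | jumpM {κ μ : ℤ → Option CAtom} {σ : List CStkElt} {n n' Tpc T₁ : ℤ} :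
      ι n = some .jump → ¬ cacheIn κ (encOp .jump) Tpc T₁ TD TD →
      CStep ι φ ⟨false, κ, μ, .data ⟨n', T₁⟩ :: σ, ⟨n, Tpc⟩⟩ none
                ⟨true, installCache κ (encOp .jump) Tpc T₁ TD TD, μ,
                 .ret ⟨n, Tpc⟩ false :: .data ⟨n', T₁⟩ :: σ, ⟨0, TD⟩⟩
  | bnzM {κ μ : ℤ → Option CAtom} {σ : List CStkElt} {n m k Tpc T₁ : ℤ} :
      ι n = some (.bnz k) → ¬ cacheIn κ (encOp .bnz) Tpc T₁ TD TD →
      CStep ι φ ⟨false, κ, μ, .data ⟨m, T₁⟩ :: σ, ⟨n, Tpc⟩⟩ none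
                ⟨true, installCache κ (encOp .bnz) Tpc T₁ TD TD, μ,
                 .ret ⟨n, Tpc⟩ false :: .data ⟨m, T₁⟩ :: σ, ⟨0, TD⟩⟩
  | callM {κ μ : ℤ → Option CAtom} {σ : List CStkElt} {n n' Tpc T₁ : ℤ} :
      ι n = some .call → ¬ cacheIn κ (encOp .call) Tpc T₁ TD TD →
      CStep ι φ ⟨false, κ, μ, .data ⟨n', T₁⟩ :: σ, ⟨n, Tpc⟩⟩ none
                ⟨true, installCache κ (encOp .call) Tpc T₁ TD TD, μ,
                 .ret ⟨n, Tpc⟩ false :: .data ⟨n', T₁⟩ :: σ, ⟨0, TD⟩⟩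
  | retM {κ μ : ℤ → Option CAtom} {σ : List CStkElt} {n m Tpc T₁ : ℤ} :
      ι n = some .ret → ¬ cacheIn κ (encOp .ret) Tpc T₁ TD TD →
      CStep ι φ ⟨false, κ, μ, .ret ⟨m, T₁⟩ false :: σ, ⟨n, Tpc⟩⟩ none
                ⟨true, installCache κ (encOp .ret) Tpc T₁ TD TD, μ,
                 .ret ⟨n, Tpc⟩ false :: .ret ⟨m, T₁⟩ false :: σ, ⟨0, TD⟩⟩
  | outputM {κ μ : ℤ → Option CAtom} {σ : List CStkElt} {n m Tpc T₁ : ℤ} :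
      ι n = some .output → ¬ cacheIn κ (encOp .output) Tpc T₁ TD TD →
      CStep ι φ ⟨false, κ, μ, .data ⟨m, T₁⟩ :: σ, ⟨n, Tpc⟩⟩ none
                ⟨true, installCache κ (encOp .output) Tpc T₁ TD TD, μ,
                 .ret ⟨n, Tpc⟩ false :: .data ⟨m, T₁⟩ :: σ, ⟨0, TD⟩⟩
  -- kernel mode
  | addK {κ μ : ℤ → Option CAtom} {σ : List CStkElt} {n t v₁ t₁ v₂ t₂ : ℤ} :
      φ n = some .add →
      CStep ι φ ⟨true, κ, μ, .data ⟨v₁, t₁⟩ :: .data ⟨v₂, t₂⟩ :: σ, ⟨n, t⟩⟩ none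
                ⟨true, κ, μ, .data ⟨v₁ + v₂, TD⟩ :: σ, ⟨n + 1, TD⟩⟩
  | pushK {κ μ : ℤ → Option CAtom} {σ : List CStkElt} {n m t : ℤ} :
      φ n = some (.push m) →
      CStep ι φ ⟨true, κ, μ, σ, ⟨n, t⟩⟩ none
                ⟨true, κ, μ, .data ⟨m, TD⟩ :: σ, ⟨n + 1, TD⟩⟩
  | loadK {κ μ : ℤ → Option CAtom} {σ : List CStkElt} {n p tp t : ℤ} {a : CAtom} :
      φ n = some .load → κ p = some a →
      CStep ι φ ⟨true, κ, μ, .data ⟨p, tp⟩ :: σ, ⟨n, t⟩⟩ none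
                ⟨true, κ, μ, .data a :: σ, ⟨n + 1, TD⟩⟩
  | storeK {κ μ : ℤ → Option CAtom} {σ : List CStkElt} {n p tp t : ℤ} {a : CAtom} :
      φ n = some .store →
      CStep ι φ ⟨true, κ, μ, .data ⟨p, tp⟩ :: .data a :: σ, ⟨n, t⟩⟩ none
                ⟨true, updC κ p a, μ, σ, ⟨n + 1, TD⟩⟩
  | jumpK {κ μ : ℤ → Option CAtom} {σ : List CStkElt} {n n' t' t : ℤ} :
      φ n = some .jump →
      CStep ι φ ⟨true, κ, μ, .data ⟨n', t'⟩ :: σ, ⟨n, t⟩⟩ none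
                ⟨true, κ, μ, σ, ⟨n', TD⟩⟩
  | bnzK {κ μ : ℤ → Option CAtom} {σ : List CStkElt} {n m k t' t : ℤ} :
      φ n = some (.bnz k) →
      CStep ι φ ⟨true, κ, μ, .data ⟨m, t'⟩ :: σ, ⟨n, t⟩⟩ none
                ⟨true, κ, μ, σ, ⟨n + (if m = 0 then 1 else k), TD⟩⟩
  | callK {κ μ : ℤ → Option CAtom} {σ : List CStkElt} {n n' t' t : ℤ} :
      φ n = some .call →
      CStep ι φ ⟨true, κ, μ, .data ⟨n', t'⟩ :: σ, ⟨n, t⟩⟩ none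
                ⟨true, κ, μ, .ret ⟨n + 1, TD⟩ true :: σ, ⟨n', TD⟩⟩
  | retK {κ μ : ℤ → Option CAtom} {σ : List CStkElt} {n t : ℤ} {a : CAtom} {π : Bool} :
      φ n = some .ret →
      CStep ι φ ⟨true, κ, μ, .ret a π :: σ, ⟨n, t⟩⟩ none ⟨π, κ, μ, σ, a⟩

/-! ### Structured code generators and the IFC fault handler -/

def genFalse : List Instr := [.push 0]
def genTrue : List Instr := [.push 1]
def genSkipIf (n : ℕ) : List Instr := [.bnz ((n : ℤ) + 1)]
def genSkip (n : ℕ) : List Instr := genTrue ++ genSkipIf n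
def genIf (t f : List Instr) : List Instr :=
  genSkipIf (f ++ genSkip t.length).length ++ (f ++ genSkip t.length) ++ t
def genLoadFrom (p : ℤ) : List Instr := [.push p, .load]
def genStoreAt (p : ℤ) : List Instr := [.push p, .store]
def genNot : List Instr := genIf genFalse genTrue
def genSome (c : List Instr) : List Instr := c ++ genTrue
def genNone : List Instr := genFalse

/-- Addresses of the tags in the rule cache. -/
def addrOpLabel : ℤ := 0
def addrTagPC : ℤ := 1
def addrTag1 : ℤ := 2
def addrTag2 : ℤ := 3
def addrTag3 : ℤ := 4
def addrTagRpc : ℤ := 5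
def addrTagR : ℤ := 6

/-- Compilation of label expressions, parameterized by the lattice-specific
generators `gb` (bottom) and `gj` (join). -/
def genELab (gb gj : List Instr) : LExpr → List Instr
  | .bot => gb
  | .labPC => genLoadFrom addrTagPC
  | .lab1 => genLoadFrom addrTag1
  | .lab2 => genLoadFrom addrTag2
  | .lab3 => genLoadFrom addrTag3
  | .join e₁ e₂ => genELab gb gj e₂ ++ genELab gb gj e₁ ++ gj

/-- Compilation of boolean expressions, additionally parameterized by the
lattice-specific generator `gf` (flows). -/
def genBoolE (gb gj gf : List Instr) : BExpr → List Instr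
  | .tru => genTrue
  | .flows e₁ e₂ => genELab gb gj e₂ ++ genELab gb gj e₁ ++ gf

/-- Compilation of a symbolic IFC rule. -/
def genApplyRule (gb gj gf : List Instr) (r : SRule) : List Instr :=
  genBoolE gb gj gf r.allow ++
  genIf (genSome (genELab gb gj r.rpc ++ genELab gb gj r.res)) genNone

/-- Guard generator: test whether the cache opcode equals (the encoding of) the
given opcode. -/
def genMatchOp (op : Opcode) : List Instr :=
  [.push (-(encOp op))] ++ genLoadFrom addrOpLabel ++ [.add] ++ genNot

/-- All the opcodes. -/
def opcodes : List Opcode :=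
  [.add, .output, .push, .load, .store, .jump, .bnz, .call, .ret]

/-- Nested case dispatch. -/
def genIndexedCases (genDefault : List Instr) (genGuard genBody : Opcode → List Instr) :
    List Opcode → List Instr
  | [] => genDefault
  | op :: ops => genGuard op ++ genIf (genBody op) (genIndexedCases genDefault genGuard genBody ops)

/-- First phase of the fault handler: dispatch on the opcode and apply the
corresponding symbolic rule. -/
def genComputeResults (gb gj gf : List Instr) (R : RuleTable) : List Instr :=
  genIndexedCases [] genMatchOp (fun op => genApplyRule gb gj gf (R op)) opcodes

/-- Second phase of the fault handler: store the computed result tags into the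
output part of the rule cache. -/
def genStoreResults : List Instr :=
  genIf (genStoreAt addrTagR ++ genStoreAt addrTagRpc ++ genTrue) genFalse

/-- The generated IFC fault handler. -/
def genFaultHandler (gb gj gf : List Instr) (R : RuleTable) : List Instr :=
  genComputeResults gb gj gf R ++ genStoreResults ++
  genIf [.ret] [.push (-1), .jump]

/-! ### Kernel-mode runs and Hoare triples -/

/-- `PrivSteps ι φ s₁ s₂`: the machine runs from `s₁` to `s₂`, all states
strictly preceding `s₂` being in kernel mode (all such steps are silent). -/
inductive PrivSteps (ι φ : InstrMem) : CState → CState → Prop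
  | refl (s : CState) : PrivSteps ι φ s s
  | step {s₁ s₂ s₃ : CState} :
      s₁.priv = true → CStep ι φ s₁ none s₂ → PrivSteps ι φ s₂ s₃ →
      PrivSteps ι φ s₁ s₃

/-- `codeAt φ n c`: the instruction memory `φ` contains the code sequence `c`
starting at address `n`. -/
def codeAt (φ : InstrMem) (n : ℤ) (c : List Instr) : Prop :=
  ∀ i : ℕ, i < c.length → φ (n + (i : ℤ)) = (c)[i]?

/-- Total-correctness Hoare triple for self-contained kernel code: if `φ`
contains `c` at the current pc and the kernel memory and stack satisfy `P`,
then the machine runs in kernel mode to the end of `c` with kernel memory and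
stack satisfying `Q` (the user memory is untouched). -/
def HT (c : List Instr) (P Q : (ℤ → Option CAtom) → List CStkElt → Prop) : Prop :=
  ∀ (ι φ : InstrMem) (n : ℤ) (κ μ : ℤ → Option CAtom) (σ : List CStkElt),
    codeAt φ n c → P κ σ →
    ∃ κ' σ', Q κ' σ' ∧
      PrivSteps ι φ ⟨true, κ, μ, σ, ⟨n, TD⟩⟩
                    ⟨true, κ', μ, σ', ⟨n + (c.length : ℤ), TD⟩⟩

/-! ### Concrete lattices -/

/-- A concrete lattice: an encoding of the labels of `L` as integer tags,
together with code sequences correctly implementing `⊥`, `⊔` and the test `≤`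
on encoded tags (specified by total-correctness Hoare triples in
weakest-precondition style). -/
structure ConcreteLattice (L : Type) [SemilatticeSup L] [OrderBot L] where
  Tag : L → ℤ
  Lab : ℤ → L
  labTag : ∀ l : L, Lab (Tag l) = l
  genBot : List Instr
  genJoin : List Instr
  genFlows : List Instr
  botSpec : ∀ P : (ℤ → Option CAtom) → List CStkElt → Prop,
    HT genBot (fun κ σ => P κ (.data ⟨Tag ⊥, TD⟩ :: σ)) P
  joinSpec : ∀ P : (ℤ → Option CAtom) → List CStkElt → Prop,
    HT genJoin
      (fun κ σ => ∃ (l₁ l₂ : L) (σ₀ : List CStkElt),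
        σ = .data ⟨Tag l₁, TD⟩ :: .data ⟨Tag l₂, TD⟩ :: σ₀ ∧
        P κ (.data ⟨Tag (l₁ ⊔ l₂), TD⟩ :: σ₀)) P
  flowsSpec : ∀ P : (ℤ → Option CAtom) → List CStkElt → Prop,
    HT genFlows
      (fun κ σ => ∃ (l₁ l₂ : L) (σ₀ : List CStkElt),
        σ = .data ⟨Tag l₁, TD⟩ :: .data ⟨Tag l₂, TD⟩ :: σ₀ ∧
        ∀ b : ℤ, (b ≠ 0 ↔ l₁ ≤ l₂) → P κ (.data ⟨b, TD⟩ :: σ₀)) P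

section Concrete

variable {L : Type} [SemilatticeSup L] [OrderBot L]

/-- The IFC fault handler compiled from a rule table, using the code generators
of a concrete lattice. -/
def faultHandler (CL : ConcreteLattice L) (R : RuleTable) : List Instr :=
  genFaultHandler CL.genBot CL.genJoin CL.genFlows R

/-- The kernel instruction memory consisting of exactly the compiled fault
handler, installed starting at address 0. -/
def handlerMem (CL : ConcreteLattice L) (R : RuleTable) : InstrMem :=
  fun q => if 0 ≤ q then (faultHandler CL R)[q.toNat]? else none

/-! ### The concrete machine as a generic machine, and matching relations -/

/-- Input data for the concrete machine. -/
structure CInput : Type where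
  prog : InstrMem
  args : List CAtom
  size : ℕ
  tag : ℤ

/-- The initial rule cache, holding an illegal opcode so that the first user
instruction always faults. -/
def initCache : ℤ → Option CAtom :=
  fun q => if 0 ≤ q ∧ q ≤ 6 then some ⟨if q = 0 then -1 else TD, TD⟩ else none

/-- The initial state of the concrete machine: user mode, cache initialized
with an illegal opcode, user memory of `size` copies of `0 @ tag`, stack
holding the arguments, pc `0 @ tag`. -/
def cInit (i : CInput) : InstrMem × CState :=
  (i.prog,
   ⟨false, initCache,
    fun q => if 0 ≤ q ∧ q < (i.size : ℤ) then some ⟨0, i.tag⟩ else none,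
    i.args.map .data, ⟨0, i.tag⟩⟩)

/-- The concrete machine step relation as a generic machine step, with the
user program part of the state and the kernel memory `φ` fixed. -/
def CStepP (φ : InstrMem) :
    (InstrMem × CState) → Option CAtom → (InstrMem × CState) → Prop :=
  fun s α s' => s'.1 = s.1 ∧ CStep s.1 φ s.2 α s'.2

/-- Matching of events/atoms: the concrete atom is the `Tag`-image of the
abstract one. -/
def matchAtomC (CL : ConcreteLattice L) (a : Atom L) (c : CAtom) : Prop :=
  c = ⟨a.val, CL.Tag a.lab⟩

/-- Matching of inputs: same program and memory size, tag-encoded arguments and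
initial label. -/
def matchInputC (CL : ConcreteLattice L) (i : AInput L) (ic : CInput) : Prop :=
  ic.prog = i.prog ∧
  ic.args = i.args.map (fun a => ⟨a.val, CL.Tag a.lab⟩) ∧
  ic.size = i.size ∧ ic.tag = CL.Tag i.lab

/-- Matching of stack elements: data matches data, return frames match return
frames with the user privilege bit, componentwise `Tag`-encoded. -/
inductive MatchStk (CL : ConcreteLattice L) : StkElt L → CStkElt → Prop
  | data {a : Atom L} {c : CAtom} :
      matchAtomC CL a c → MatchStk CL (.data a) (.data c)
  | ret {a : Atom L} {c : CAtom} :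
      matchAtomC CL a c → MatchStk CL (.ret a) (.ret c false)

/-- Cache consistency `𝓡 ⊢ κ`: the rule cache never lies with respect to the
rule table `R`. -/
def CacheConsistent (CL : ConcreteLattice L) (R : RuleTable)
    (κ : ℤ → Option CAtom) : Prop :=
  ∀ (op : Opcode) (Lpc L₁ L₂ L₃ : L),
    cacheIn κ (encOp op) (CL.Tag Lpc) (CL.Tag L₁) (CL.Tag L₂) (CL.Tag L₃) →
    ∃ Lrpc Lr : L, Judge R (Lpc, L₁, L₂, L₃) op Lrpc Lr ∧
      cacheOut κ (CL.Tag Lrpc) (CL.Tag Lr)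

/-- Matching of symbolic-rule-machine states and concrete states (`≈ˢᶜ`). -/
def MatchState (CL : ConcreteLattice L) (R : RuleTable)
    (qs : AState L) (cs : CState) : Prop :=
  cs.priv = false ∧
  CacheConsistent CL R cs.kmem ∧
  (∀ p, Option.Rel (matchAtomC CL) (qs.mem p) (cs.umem p)) ∧
  List.Forall₂ (MatchStk CL) qs.stk cs.stk ∧
  cs.pc = ⟨qs.pc.val, CL.Tag qs.pc.lab⟩

end Concrete

section Dev
variable {L : Type} [SemilatticeSup L] [OrderBot L]

theorem PrivSteps.trans {ι φ : InstrMem} {s₁ s₂ s₃ : CState} :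
    PrivSteps ι φ s₁ s₂ → PrivSteps ι φ s₂ s₃ → PrivSteps ι φ s₁ s₃ := by
  intro h1 h2
  induction h1 with
  | refl => exact h2
  | step hp hs _ ih => exact .step hp hs (ih h2)

theorem codeAt_cons {φ : InstrMem} {n : ℤ} {i : Instr} {c : List Instr} :
    codeAt φ n (i :: c) → φ n = some i ∧ codeAt φ (n + 1) c := by
  intro h
  constructor
  · have := h 0 (by simp)
    simpa using this
  · intro j hj
    have := h (j + 1) (by simpa using Nat.succ_lt_succ hj)
    have e : n + ((j : ℤ) + 1) = n + 1 + (j : ℤ) := by ring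
    simpa [e] using this

theorem codeAt_append {φ : InstrMem} {n : ℤ} {c₁ c₂ : List Instr} :
    codeAt φ n (c₁ ++ c₂) → codeAt φ n c₁ ∧ codeAt φ (n + (c₁.length : ℤ)) c₂ := by
  induction c₁ generalizing n with
  | nil => intro h; exact ⟨fun i hi => by simp at hi, by simpa using h⟩
  | cons i c ih =>
    intro h
    obtain ⟨h0, h1⟩ := codeAt_cons (by simpa using h)
    obtain ⟨ha, hb⟩ := ih h1
    refine ⟨?_, ?_⟩
    · intro j hj
      cases j with
      | zero => simpa using h0
      | succ j =>
        have := ha j (by simpa using Nat.lt_of_succ_lt_succ hj)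
        have e : n + ((j : ℤ) + 1) = n + 1 + (j : ℤ) := by ring
        simpa [e] using this
    · have e : n + ((c.length : ℤ) + 1) = n + 1 + (c.length : ℤ) := by ring
      simpa [e] using hb

theorem HT_weaken {c : List Instr} {P P' Q Q' : (ℤ → Option CAtom) → List CStkElt → Prop}
    (hP : ∀ κ σ, P' κ σ → P κ σ) (hQ : ∀ κ σ, Q κ σ → Q' κ σ) (h : HT c P Q) :
    HT c P' Q' := by
  intro ι φ n κ μ σ hc hp
  obtain ⟨κ', σ', hq, hrun⟩ := h ι φ n κ μ σ hc (hP _ _ hp)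
  exact ⟨κ', σ', hQ _ _ hq, hrun⟩

theorem HT_seq {c₁ c₂ : List Instr} {P Q R : (ℤ → Option CAtom) → List CStkElt → Prop}
    (h₁ : HT c₁ P Q) (h₂ : HT c₂ Q R) : HT (c₁ ++ c₂) P R := by
  intro ι φ n κ μ σ hc hp
  obtain ⟨hca, hcb⟩ := codeAt_append hc
  obtain ⟨κ₁, σ₁, hq, hr₁⟩ := h₁ ι φ n κ μ σ hca hp
  obtain ⟨κ₂, σ₂, hr, hr₂⟩ := h₂ ι φ (n + (c₁.length : ℤ)) κ₁ μ σ₁ hcb hq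
  refine ⟨κ₂, σ₂, hr, ?_⟩
  have e : n + ((c₁ ++ c₂).length : ℤ) = n + (c₁.length : ℤ) + (c₂.length : ℤ) := by
    simp [List.length_append]; ring
  rw [e]
  exact hr₁.trans hr₂

theorem HT_push (m : ℤ) (P : (ℤ → Option CAtom) → List CStkElt → Prop) :
    HT [.push m] (fun κ σ => P κ (.data ⟨m, TD⟩ :: σ)) P := by
  intro ι φ n κ μ σ hc hp
  obtain ⟨h0, -⟩ := codeAt_cons hc
  exact ⟨κ, _, hp, .step rfl (.pushK h0) (by simpa using PrivSteps.refl _)⟩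

theorem HT_add (P : (ℤ → Option CAtom) → List CStkElt → Prop) :
    HT [.add] (fun κ σ => ∃ v₁ t₁ v₂ t₂ σ₀, σ = .data ⟨v₁, t₁⟩ :: .data ⟨v₂, t₂⟩ :: σ₀ ∧
      P κ (.data ⟨v₁ + v₂, TD⟩ :: σ₀)) P := by
  intro ι φ n κ μ σ hc hp
  obtain ⟨v₁, t₁, v₂, t₂, σ₀, rfl, hp⟩ := hp
  obtain ⟨h0, -⟩ := codeAt_cons hc
  exact ⟨κ, _, hp, .step rfl (.addK h0) (by simpa using PrivSteps.refl _)⟩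

theorem HT_load (P : (ℤ → Option CAtom) → List CStkElt → Prop) :
    HT [.load] (fun κ σ => ∃ p tp σ₀ a, σ = .data ⟨p, tp⟩ :: σ₀ ∧ κ p = some a ∧
      P κ (.data a :: σ₀)) P := by
  intro ι φ n κ μ σ hc hp
  obtain ⟨p, tp, σ₀, a, rfl, ha, hp⟩ := hp
  obtain ⟨h0, -⟩ := codeAt_cons hc
  exact ⟨κ, _, hp, .step rfl (.loadK h0 ha) (by simpa using PrivSteps.refl _)⟩

theorem HT_store (P : (ℤ → Option CAtom) → List CStkElt → Prop) :
    HT [.store] (fun κ σ => ∃ p tp a σ₀, σ = .data ⟨p, tp⟩ :: .data a :: σ₀ ∧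
      P (updC κ p a) σ₀) P := by
  intro ι φ n κ μ σ hc hp
  obtain ⟨p, tp, a, σ₀, rfl, hp⟩ := hp
  obtain ⟨h0, -⟩ := codeAt_cons hc
  exact ⟨_, _, hp, .step rfl (.storeK h0) (by simpa using PrivSteps.refl _)⟩

end Dev
section Dev2

theorem genIf_eq (t f : List Instr) :
    genIf t f = .bnz ((f.length : ℤ) + 3) ::
      (f ++ (.push 1 :: .bnz ((t.length : ℤ) + 1) :: t)) := by
  simp only [genIf, genSkipIf, genSkip, genTrue, List.length_append, List.length_cons,
    List.cons_append, List.nil_append, List.append_assoc]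
  norm_num
  omega

theorem HT_if {t f : List Instr} {Pt Pf Q : (ℤ → Option CAtom) → List CStkElt → Prop}
    (ht : HT t Pt Q) (hf : HT f Pf Q) :
    HT (genIf t f) (fun κ σ => ∃ b tb σ₀, σ = .data ⟨b, tb⟩ :: σ₀ ∧
      ((b ≠ 0 ∧ Pt κ σ₀) ∨ (b = 0 ∧ Pf κ σ₀))) Q := by
  intro ι φ n κ μ σ hc hp
  obtain ⟨b, tb, σ₀, rfl, hbr⟩ := hp
  rw [genIf_eq] at hc
  obtain ⟨hbnz, hc⟩ := codeAt_cons hc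
  obtain ⟨hcf, hc⟩ := codeAt_append hc
  obtain ⟨hpush, hc⟩ := codeAt_cons hc
  obtain ⟨hbnz2, hct⟩ := codeAt_cons hc
  have hlen : n + ((genIf t f).length : ℤ) = n + 1 + (f.length : ℤ) + 2 + (t.length : ℤ) := by
    rw [genIf_eq]; push_cast [List.length_cons, List.length_append]; ring
  rcases hbr with ⟨hb, hpt⟩ | ⟨hb, hpf⟩
  · -- b ≠ 0 : jump to t
    have hct' : codeAt φ (n + ((f.length : ℤ) + 3)) t := by
      have e : n + ((f.length : ℤ) + 3) = n + 1 + (f.length : ℤ) + 1 + 1 := by ring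
      rw [e]; exact hct
    obtain ⟨κ', σ', hq, hrun⟩ := ht ι φ (n + ((f.length : ℤ) + 3)) κ μ σ₀ hct' hpt
    refine ⟨κ', σ', hq, .step rfl (.bnzK hbnz) ?_⟩
    have e1 : n + (if b = 0 then 1 else (f.length : ℤ) + 3) = n + ((f.length : ℤ) + 3) := by
      simp [hb]
    rw [e1]
    have e2 : n + ((f.length : ℤ) + 3) + (t.length : ℤ)
        = n + ((genIf t f).length : ℤ) := by rw [hlen]; ring
    rw [← e2]
    exact hrun
  · -- b = 0 : fall through to f, then skip t
    obtain ⟨κ', σ', hq, hrun⟩ := hf ι φ (n + 1) κ μ σ₀ hcf hpf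
    refine ⟨κ', σ', hq, .step rfl (.bnzK hbnz) ?_⟩
    have e1 : n + (if b = 0 then 1 else (f.length : ℤ) + 3) = n + 1 := by simp [hb]
    rw [e1]
    refine hrun.trans (.step rfl (.pushK hpush) (.step rfl (.bnzK hbnz2) ?_))
    · have e3 : n + 1 + (f.length : ℤ) + 1 + (if (1 : ℤ) = 0 then 1 else (t.length : ℤ) + 1)
          = n + ((genIf t f).length : ℤ) := by rw [hlen]; norm_num; ring
      rw [e3]
      exact PrivSteps.refl _

end Dev2
section Dev3
variable {L : Type} [SemilatticeSup L] [OrderBot L]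

/-- Which cache-input slots an expression needs, with `Tag`-encoded labels. -/
def okL (CL : ConcreteLattice L) (κ : ℤ → Option CAtom) (ρ : L × L × L × L) :
    LExpr → Prop
  | .bot => True
  | .labPC => κ addrTagPC = some ⟨CL.Tag ρ.1, TD⟩
  | .lab1 => κ addrTag1 = some ⟨CL.Tag ρ.2.1, TD⟩
  | .lab2 => κ addrTag2 = some ⟨CL.Tag ρ.2.2.1, TD⟩
  | .lab3 => κ addrTag3 = some ⟨CL.Tag ρ.2.2.2, TD⟩
  | .join e₁ e₂ => okL CL κ ρ e₁ ∧ okL CL κ ρ e₂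

def okB (CL : ConcreteLattice L) (κ : ℤ → Option CAtom) (ρ : L × L × L × L) :
    BExpr → Prop
  | .tru => True
  | .flows e₁ e₂ => okL CL κ ρ e₁ ∧ okL CL κ ρ e₂

theorem HT_loadFrom (p : ℤ) (P : (ℤ → Option CAtom) → List CStkElt → Prop) :
    HT (genLoadFrom p) (fun κ σ => ∃ a, κ p = some a ∧ P κ (.data a :: σ)) P := by
  show HT ([Instr.push p] ++ [Instr.load]) _ _
  have h1 := HT_push p (fun κ σ => ∃ p' tp σ₀ a, σ = .data ⟨p', tp⟩ :: σ₀ ∧ κ p' = some a ∧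
    P κ (.data a :: σ₀))
  refine HT_weaken ?_ (fun _ _ h => h) (HT_seq h1 (HT_load P))
  rintro κ σ ⟨a, ha, hp⟩
  exact ⟨p, TD, σ, a, rfl, ha, hp⟩

theorem HT_lab (CL : ConcreteLattice L) (ρ : L × L × L × L) (e : LExpr)
    (P : (ℤ → Option CAtom) → List CStkElt → Prop) :
    HT (genELab CL.genBot CL.genJoin e)
      (fun κ σ => okL CL κ ρ e ∧ P κ (.data ⟨CL.Tag (evalL ρ e), TD⟩ :: σ)) P := by
  induction e generalizing P with
  | bot => exact HT_weaken (fun κ σ h => h.2) (fun _ _ h => h) (CL.botSpec P)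
  | labPC =>
    refine HT_weaken ?_ (fun _ _ h => h) (HT_loadFrom addrTagPC P)
    rintro κ σ ⟨hok, hp⟩; exact ⟨_, hok, hp⟩
  | lab1 =>
    refine HT_weaken ?_ (fun _ _ h => h) (HT_loadFrom addrTag1 P)
    rintro κ σ ⟨hok, hp⟩; exact ⟨_, hok, hp⟩
  | lab2 =>
    refine HT_weaken ?_ (fun _ _ h => h) (HT_loadFrom addrTag2 P)
    rintro κ σ ⟨hok, hp⟩; exact ⟨_, hok, hp⟩
  | lab3 =>
    refine HT_weaken ?_ (fun _ _ h => h) (HT_loadFrom addrTag3 P)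
    rintro κ σ ⟨hok, hp⟩; exact ⟨_, hok, hp⟩
  | join e₁ e₂ ih₁ ih₂ =>
    show HT (genELab CL.genBot CL.genJoin e₂ ++ genELab CL.genBot CL.genJoin e₁ ++ CL.genJoin) _ _
    refine HT_weaken ?_ (fun _ _ h => h)
      (HT_seq (HT_seq (ih₂ _) (ih₁ _)) (CL.joinSpec P))
    rintro κ σ ⟨⟨hok1, hok2⟩, hp⟩
    exact ⟨hok2, hok1, evalL ρ e₁, evalL ρ e₂, σ, rfl, hp⟩

theorem HT_bool (CL : ConcreteLattice L) (ρ : L × L × L × L) (be : BExpr)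
    (P : (ℤ → Option CAtom) → List CStkElt → Prop) :
    HT (genBoolE CL.genBot CL.genJoin CL.genFlows be)
      (fun κ σ => okB CL κ ρ be ∧
        ∀ b : ℤ, (b ≠ 0 ↔ evalB ρ be) → P κ (.data ⟨b, TD⟩ :: σ)) P := by
  cases be with
  | tru =>
    refine HT_weaken ?_ (fun _ _ h => h) (HT_push 1 P)
    rintro κ σ ⟨-, hp⟩
    exact hp 1 (by simp [evalB])
  | flows e₁ e₂ =>
    show HT (genELab CL.genBot CL.genJoin e₂ ++ genELab CL.genBot CL.genJoin e₁ ++ CL.genFlows) _ _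
    refine HT_weaken ?_ (fun _ _ h => h)
      (HT_seq (HT_seq (HT_lab CL ρ e₂ _) (HT_lab CL ρ e₁ _)) (CL.flowsSpec P))
    rintro κ σ ⟨⟨hok1, hok2⟩, hp⟩
    exact ⟨hok2, hok1, evalL ρ e₁, evalL ρ e₂, σ, rfl, fun b hb => hp b hb⟩

theorem HT_not (P : (ℤ → Option CAtom) → List CStkElt → Prop) :
    HT genNot (fun κ σ => ∃ b tb σ₀, σ = .data ⟨b, tb⟩ :: σ₀ ∧
      ∀ b' : ℤ, (b' ≠ 0 ↔ b = 0) → P κ (.data ⟨b', TD⟩ :: σ₀)) P := by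
  refine HT_weaken ?_ (fun _ _ h => h) (HT_if (t := genFalse) (f := genTrue)
    (Pt := fun κ σ => P κ (.data ⟨0, TD⟩ :: σ)) (Pf := fun κ σ => P κ (.data ⟨1, TD⟩ :: σ))
    (HT_push 0 P) (HT_push 1 P))
  rintro κ σ ⟨b, tb, σ₀, rfl, hp⟩
  refine ⟨b, tb, σ₀, rfl, ?_⟩
  by_cases hb : b = 0
  · exact Or.inr ⟨hb, hp 1 (by simp [hb])⟩
  · exact Or.inl ⟨hb, hp 0 (by simp [hb])⟩

theorem HT_match (op : Opcode) (P : (ℤ → Option CAtom) → List CStkElt → Prop) :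
    HT (genMatchOp op) (fun κ σ => ∃ v t0, κ addrOpLabel = some ⟨v, t0⟩ ∧
      ∀ b : ℤ, (b ≠ 0 ↔ v = encOp op) → P κ (.data ⟨b, TD⟩ :: σ)) P := by
  show HT ([Instr.push (-(encOp op))] ++ genLoadFrom addrOpLabel ++ [Instr.add] ++ genNot) _ _
  refine HT_weaken ?_ (fun _ _ h => h)
    (HT_seq (HT_seq (HT_seq (HT_push _ _) (HT_loadFrom _ _)) (HT_add _)) (HT_not P))
  rintro κ σ ⟨v, t0, hv, hb⟩
  refine ⟨⟨v, t0⟩, hv, v, t0, -(encOp op), TD, σ, rfl, v + -(encOp op), TD, σ, rfl, ?_⟩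
  intro b' hb'
  exact hb b' (by omega)

end Dev3
section Dev4
variable {L : Type} [SemilatticeSup L] [OrderBot L]

theorem encOp_inj : ∀ a b : Opcode, encOp a = encOp b → a = b := by
  intro a b
  cases a <;> cases b <;> simp [encOp]

theorem HT_apply (CL : ConcreteLattice L) (ρ : L × L × L × L) (r : SRule)
    (P : (ℤ → Option CAtom) → List CStkElt → Prop) :
    HT (genApplyRule CL.genBot CL.genJoin CL.genFlows r)
      (fun κ σ => okB CL κ ρ r.allow ∧ okL CL κ ρ r.rpc ∧ okL CL κ ρ r.res ∧
        (evalB ρ r.allow →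
          P κ (.data ⟨1, TD⟩ :: .data ⟨CL.Tag (evalL ρ r.res), TD⟩ ::
               .data ⟨CL.Tag (evalL ρ r.rpc), TD⟩ :: σ)) ∧
        (¬ evalB ρ r.allow → P κ (.data ⟨0, TD⟩ :: σ))) P := by
  show HT (genBoolE CL.genBot CL.genJoin CL.genFlows r.allow ++
    genIf (genSome (genELab CL.genBot CL.genJoin r.rpc ++ genELab CL.genBot CL.genJoin r.res))
      genNone) _ _
  have hthen : HT (genSome (genELab CL.genBot CL.genJoin r.rpc ++ genELab CL.genBot CL.genJoin r.res))
      (fun κ σ => okL CL κ ρ r.rpc ∧ okL CL κ ρ r.res ∧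
        P κ (.data ⟨1, TD⟩ :: .data ⟨CL.Tag (evalL ρ r.res), TD⟩ ::
             .data ⟨CL.Tag (evalL ρ r.rpc), TD⟩ :: σ)) P := by
    show HT ((genELab CL.genBot CL.genJoin r.rpc ++ genELab CL.genBot CL.genJoin r.res) ++ genTrue) _ _
    refine HT_weaken ?_ (fun _ _ h => h)
      (HT_seq (HT_seq (HT_lab CL ρ r.rpc _) (HT_lab CL ρ r.res _)) (HT_push 1 P))
    rintro κ σ ⟨h1, h2, hp⟩
    exact ⟨h1, h2, hp⟩
  have helse : HT genNone (fun κ σ => P κ (.data ⟨0, TD⟩ :: σ)) P := HT_push 0 P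
  refine HT_weaken ?_ (fun _ _ h => h) (HT_seq (HT_bool CL ρ r.allow _) (HT_if hthen helse))
  rintro κ σ ⟨hok, hok1, hok2, hT, hF⟩
  refine ⟨hok, ?_⟩
  intro b hb
  refine ⟨b, TD, σ, rfl, ?_⟩
  by_cases h : b = 0
  · exact Or.inr ⟨h, hF (by rw [← hb]; simp [h])⟩
  · exact Or.inl ⟨h, hok1, hok2, hT (hb.mp h)⟩

theorem HT_false (c : List Instr) (Q : (ℤ → Option CAtom) → List CStkElt → Prop) :
    HT c (fun _ _ => False) Q := by
  intro ι φ n κ μ σ hc hp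
  exact absurd hp id

theorem HT_cases (CL : ConcreteLattice L)
    {Q : (ℤ → Option CAtom) → List CStkElt → Prop}
    (genBody : Opcode → List Instr) (Pb : Opcode → (ℤ → Option CAtom) → List CStkElt → Prop)
    (op : Opcode)
    (hbody : HT (genBody op) (Pb op) Q) :
    ∀ ops : List Opcode, op ∈ ops →
    HT (genIndexedCases [] genMatchOp genBody ops)
      (fun κ σ => κ addrOpLabel = some ⟨encOp op, TD⟩ ∧ Pb op κ σ) Q := by
  intro ops
  induction ops with
  | nil => intro h; exact absurd h (by simp)
  | cons op₀ ops ih =>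
    intro hmem
    show HT (genMatchOp op₀ ++ genIf (genBody op₀) (genIndexedCases [] genMatchOp genBody ops)) _ _
    have hthen : HT (genBody op₀) (fun κ σ => op = op₀ ∧ Pb op κ σ) Q := by
      intro ι φ n κ μ σ hc hp
      obtain ⟨rfl, hp⟩ := hp
      exact hbody ι φ n κ μ σ hc hp
    have helse : HT (genIndexedCases [] genMatchOp genBody ops)
        (fun κ σ => op ≠ op₀ ∧ κ addrOpLabel = some ⟨encOp op, TD⟩ ∧ Pb op κ σ) Q := by
      intro ι φ n κ μ σ hc hp
      obtain ⟨hne, h0, hp⟩ := hp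
      have hmem' : op ∈ ops := by
        rcases List.mem_cons.mp hmem with h | h
        · exact absurd h hne
        · exact h
      exact ih hmem' ι φ n κ μ σ hc ⟨h0, hp⟩
    refine HT_weaken ?_ (fun _ _ h => h) (HT_seq (HT_match op₀ _) (HT_if hthen helse))
    rintro κ σ ⟨h0, hp⟩
    refine ⟨encOp op, TD, h0, ?_⟩
    intro b hb
    refine ⟨b, TD, σ, rfl, ?_⟩
    by_cases h : op = op₀
    · subst h
      exact Or.inl ⟨hb.mpr rfl, rfl, hp⟩
    · refine Or.inr ⟨?_, h, h0, hp⟩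
      by_contra hb0
      exact h (encOp_inj _ _ (hb.mp hb0))

theorem HT_storeRes (P : (ℤ → Option CAtom) → List CStkElt → Prop) :
    HT genStoreResults
      (fun κ σ => ∃ b tb σ₀, σ = .data ⟨b, tb⟩ :: σ₀ ∧
        ((b ≠ 0 ∧ ∃ a₁ a₂ σ₁, σ₀ = .data a₁ :: .data a₂ :: σ₁ ∧
            P (updC (updC κ addrTagR a₁) addrTagRpc a₂) (.data ⟨1, TD⟩ :: σ₁)) ∨
         (b = 0 ∧ P κ (.data ⟨0, TD⟩ :: σ₀)))) P := by
  have hthen : HT (genStoreAt addrTagR ++ genStoreAt addrTagRpc ++ genTrue)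
      (fun κ σ => ∃ a₁ a₂ σ₁, σ = .data a₁ :: .data a₂ :: σ₁ ∧
        P (updC (updC κ addrTagR a₁) addrTagRpc a₂) (.data ⟨1, TD⟩ :: σ₁)) P := by
    have hs : ∀ (p : ℤ) (Q : (ℤ → Option CAtom) → List CStkElt → Prop),
        HT (genStoreAt p) (fun κ σ => ∃ a σ₁, σ = .data a :: σ₁ ∧ Q (updC κ p a) σ₁) Q := by
      intro p Q
      show HT ([Instr.push p] ++ [Instr.store]) _ _
      have h1 := HT_push p (fun κ σ => ∃ p' tp a σ₀, σ = .data ⟨p', tp⟩ :: .data a :: σ₀ ∧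
        Q (updC κ p' a) σ₀)
      refine HT_weaken ?_ (fun _ _ h => h) (HT_seq h1 (HT_store Q))
      rintro κ σ ⟨a, σ₁, rfl, hq⟩
      exact ⟨p, TD, a, σ₁, rfl, hq⟩
    refine HT_weaken ?_ (fun _ _ h => h) (HT_seq (HT_seq (hs _ _) (hs _ _)) (HT_push 1 P))
    rintro κ σ ⟨a₁, a₂, σ₁, rfl, hp⟩
    exact ⟨a₁, _, rfl, a₂, σ₁, rfl, hp⟩
  have helse : HT genFalse (fun κ σ => P κ (.data ⟨0, TD⟩ :: σ)) P := HT_push 0 P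
  refine HT_weaken ?_ (fun _ _ h => h) (HT_if hthen helse)
  rintro κ σ ⟨b, tb, σ₀, rfl, hbr⟩
  exact ⟨b, tb, σ₀, rfl, hbr⟩

end Dev4
section Dev5
variable {L : Type} [SemilatticeSup L] [OrderBot L]

theorem handler_codeAt (CL : ConcreteLattice L) (R : RuleTable) :
    codeAt (handlerMem CL R) 0 (faultHandler CL R) := by
  intro i hi
  have h0 : (0 : ℤ) ≤ (i : ℤ) := Int.ofNat_nonneg i
  simp [handlerMem, h0]

theorem tail_eq : genIf [Instr.ret] [Instr.push (-1), Instr.jump] =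
    [.bnz 5, .push (-1), .jump, .push 1, .bnz 2, .ret] := by
  norm_num [genIf, genSkipIf, genSkip, genTrue]

theorem opcode_mem : ∀ op : Opcode, op ∈ opcodes := by
  intro op; cases op <;> simp [opcodes]

/-- Main fault handler correctness. -/
theorem handler_run (CL : ConcreteLattice L) (ι : InstrMem) (μ : ℤ → Option CAtom)
    (σ : List CStkElt) (n Tpc : ℤ) (op : Opcode) (ρ : L × L × L × L)
    (κ : ℤ → Option CAtom)
    (hκ0 : κ addrOpLabel = some ⟨encOp op, TD⟩)
    (hok1 : okB CL κ ρ (RabsTable op).allow)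
    (hok2 : okL CL κ ρ (RabsTable op).rpc)
    (hok3 : okL CL κ ρ (RabsTable op).res) :
    (evalB ρ (RabsTable op).allow →
      PrivSteps ι (handlerMem CL RabsTable)
        ⟨true, κ, μ, .ret ⟨n, Tpc⟩ false :: σ, ⟨0, TD⟩⟩
        ⟨false, updC (updC κ addrTagR ⟨CL.Tag (evalL ρ (RabsTable op).res), TD⟩)
            addrTagRpc ⟨CL.Tag (evalL ρ (RabsTable op).rpc), TD⟩, μ, σ, ⟨n, Tpc⟩⟩) ∧
    (¬ evalB ρ (RabsTable op).allow →
      PrivSteps ι (handlerMem CL RabsTable)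
        ⟨true, κ, μ, .ret ⟨n, Tpc⟩ false :: σ, ⟨0, TD⟩⟩
        ⟨true, κ, μ, .ret ⟨n, Tpc⟩ false :: σ, ⟨-1, TD⟩⟩) := by
  set φ := handlerMem CL RabsTable with hφ
  have hcode : codeAt φ 0 (faultHandler CL RabsTable) := handler_codeAt CL RabsTable
  have hcode' : codeAt φ 0
      ((genComputeResults CL.genBot CL.genJoin CL.genFlows RabsTable ++ genStoreResults) ++
        genIf [Instr.ret] [Instr.push (-1), Instr.jump]) := hcode
  obtain ⟨hcAB, hcC⟩ := codeAt_append hcode'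
  rw [tail_eq] at hcC
  obtain ⟨hI0, hcC⟩ := codeAt_cons hcC
  obtain ⟨hI1, hcC⟩ := codeAt_cons hcC
  obtain ⟨hI2, hcC⟩ := codeAt_cons hcC
  obtain ⟨hI3, hcC⟩ := codeAt_cons hcC
  obtain ⟨hI4, hcC⟩ := codeAt_cons hcC
  obtain ⟨hI5, -⟩ := codeAt_cons hcC
  set m : ℤ := 0 + ((genComputeResults CL.genBot CL.genJoin CL.genFlows RabsTable ++
    genStoreResults).length : ℤ) with hm
  constructor
  · -- success
    intro hA
    set P : (ℤ → Option CAtom) → List CStkElt → Prop := fun κ' σ' =>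
      κ' = updC (updC κ addrTagR ⟨CL.Tag (evalL ρ (RabsTable op).res), TD⟩)
            addrTagRpc ⟨CL.Tag (evalL ρ (RabsTable op).rpc), TD⟩ ∧
      σ' = .data ⟨1, TD⟩ :: .ret ⟨n, Tpc⟩ false :: σ with hP
    have hbody := HT_apply CL ρ (RabsTable op) (fun κ σ => ∃ b tb σ₀, σ = .data ⟨b, tb⟩ :: σ₀ ∧
        ((b ≠ 0 ∧ ∃ a₁ a₂ σ₁, σ₀ = .data a₁ :: .data a₂ :: σ₁ ∧
            P (updC (updC κ addrTagR a₁) addrTagRpc a₂) (.data ⟨1, TD⟩ :: σ₁)) ∨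
         (b = 0 ∧ P κ (.data ⟨0, TD⟩ :: σ₀))))
    have hcases := HT_cases CL (fun op' => genApplyRule CL.genBot CL.genJoin CL.genFlows (RabsTable op'))
      (fun op' κ σ => okB CL κ ρ (RabsTable op').allow ∧ okL CL κ ρ (RabsTable op').rpc ∧
        okL CL κ ρ (RabsTable op').res ∧
        (evalB ρ (RabsTable op').allow →
          (fun κ σ => ∃ b tb σ₀, σ = .data ⟨b, tb⟩ :: σ₀ ∧
            ((b ≠ 0 ∧ ∃ a₁ a₂ σ₁, σ₀ = .data a₁ :: .data a₂ :: σ₁ ∧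
                P (updC (updC κ addrTagR a₁) addrTagRpc a₂) (.data ⟨1, TD⟩ :: σ₁)) ∨
             (b = 0 ∧ P κ (.data ⟨0, TD⟩ :: σ₀)))) κ
            (.data ⟨1, TD⟩ :: .data ⟨CL.Tag (evalL ρ (RabsTable op').res), TD⟩ ::
             .data ⟨CL.Tag (evalL ρ (RabsTable op').rpc), TD⟩ :: σ)) ∧
        (¬ evalB ρ (RabsTable op').allow →
          (fun κ σ => ∃ b tb σ₀, σ = .data ⟨b, tb⟩ :: σ₀ ∧
            ((b ≠ 0 ∧ ∃ a₁ a₂ σ₁, σ₀ = .data a₁ :: .data a₂ :: σ₁ ∧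
                P (updC (updC κ addrTagR a₁) addrTagRpc a₂) (.data ⟨1, TD⟩ :: σ₁)) ∨
             (b = 0 ∧ P κ (.data ⟨0, TD⟩ :: σ₀)))) κ (.data ⟨0, TD⟩ :: σ)))
      op hbody opcodes (opcode_mem op)
    have hAB := HT_seq hcases (HT_storeRes P)
    obtain ⟨κ', σ', ⟨hκ', hσ'⟩, run⟩ := hAB ι φ 0 κ μ (.ret ⟨n, Tpc⟩ false :: σ) hcAB
      ⟨hκ0, hok1, hok2, hok3,
        fun _ => ⟨1, TD, _, rfl, Or.inl ⟨one_ne_zero,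
          ⟨CL.Tag (evalL ρ (RabsTable op).res), TD⟩, ⟨CL.Tag (evalL ρ (RabsTable op).rpc), TD⟩,
          .ret ⟨n, Tpc⟩ false :: σ, rfl, rfl, rfl⟩⟩,
        fun h => absurd hA h⟩
    subst hκ' hσ'
    have run' : PrivSteps ι φ ⟨true, κ, μ, .ret ⟨n, Tpc⟩ false :: σ, ⟨0, TD⟩⟩
        ⟨true, updC (updC κ addrTagR ⟨CL.Tag (evalL ρ (RabsTable op).res), TD⟩) addrTagRpc
            ⟨CL.Tag (evalL ρ (RabsTable op).rpc), TD⟩, μ,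
          .data ⟨1, TD⟩ :: .ret ⟨n, Tpc⟩ false :: σ, ⟨m, TD⟩⟩ := run
    refine run'.trans (.step rfl (.bnzK hI0) ?_)
    rw [show m + (if (1 : ℤ) = 0 then 1 else 5) = m + 1 + 1 + 1 + 1 + 1 by rw [if_neg one_ne_zero]; ring]
    exact .step rfl (.retK hI5) (.refl _)
  · -- failure
    intro hA
    set P : (ℤ → Option CAtom) → List CStkElt → Prop := fun κ' σ' =>
      κ' = κ ∧ σ' = .data ⟨0, TD⟩ :: .ret ⟨n, Tpc⟩ false :: σ with hP
    have hbody := HT_apply CL ρ (RabsTable op) (fun κ σ => ∃ b tb σ₀, σ = .data ⟨b, tb⟩ :: σ₀ ∧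
        ((b ≠ 0 ∧ ∃ a₁ a₂ σ₁, σ₀ = .data a₁ :: .data a₂ :: σ₁ ∧
            P (updC (updC κ addrTagR a₁) addrTagRpc a₂) (.data ⟨1, TD⟩ :: σ₁)) ∨
         (b = 0 ∧ P κ (.data ⟨0, TD⟩ :: σ₀))))
    have hcases := HT_cases CL (fun op' => genApplyRule CL.genBot CL.genJoin CL.genFlows (RabsTable op'))
      (fun op' κ σ => okB CL κ ρ (RabsTable op').allow ∧ okL CL κ ρ (RabsTable op').rpc ∧
        okL CL κ ρ (RabsTable op').res ∧
        (evalB ρ (RabsTable op').allow →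
          (fun κ σ => ∃ b tb σ₀, σ = .data ⟨b, tb⟩ :: σ₀ ∧
            ((b ≠ 0 ∧ ∃ a₁ a₂ σ₁, σ₀ = .data a₁ :: .data a₂ :: σ₁ ∧
                P (updC (updC κ addrTagR a₁) addrTagRpc a₂) (.data ⟨1, TD⟩ :: σ₁)) ∨
             (b = 0 ∧ P κ (.data ⟨0, TD⟩ :: σ₀)))) κ
            (.data ⟨1, TD⟩ :: .data ⟨CL.Tag (evalL ρ (RabsTable op').res), TD⟩ ::
             .data ⟨CL.Tag (evalL ρ (RabsTable op').rpc), TD⟩ :: σ)) ∧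
        (¬ evalB ρ (RabsTable op').allow →
          (fun κ σ => ∃ b tb σ₀, σ = .data ⟨b, tb⟩ :: σ₀ ∧
            ((b ≠ 0 ∧ ∃ a₁ a₂ σ₁, σ₀ = .data a₁ :: .data a₂ :: σ₁ ∧
                P (updC (updC κ addrTagR a₁) addrTagRpc a₂) (.data ⟨1, TD⟩ :: σ₁)) ∨
             (b = 0 ∧ P κ (.data ⟨0, TD⟩ :: σ₀)))) κ (.data ⟨0, TD⟩ :: σ)))
      op hbody opcodes (opcode_mem op)
    have hAB := HT_seq hcases (HT_storeRes P)
    obtain ⟨κ', σ', ⟨hκ', hσ'⟩, run⟩ := hAB ι φ 0 κ μ (.ret ⟨n, Tpc⟩ false :: σ) hcAB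
      ⟨hκ0, hok1, hok2, hok3,
        fun h => absurd h hA,
        fun _ => ⟨0, TD, _, rfl, Or.inr ⟨rfl, rfl, rfl⟩⟩⟩
    subst hσ'
    rw [hκ'] at run
    have run' : PrivSteps ι φ ⟨true, κ, μ, .ret ⟨n, Tpc⟩ false :: σ, ⟨0, TD⟩⟩
        ⟨true, κ, μ, .data ⟨0, TD⟩ :: .ret ⟨n, Tpc⟩ false :: σ, ⟨m, TD⟩⟩ := run
    refine run'.trans (.step rfl (.bnzK hI0) ?_)
    rw [show m + (if (0 : ℤ) = 0 then 1 else 5) = m + 1 by rw [if_pos rfl]]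
    exact .step rfl (.pushK hI1) (.step rfl (.jumpK hI2) (.refl _))

end Dev5
section Dev6
variable {L : Type} [SemilatticeSup L] [OrderBot L]

inductive TracesN {S E : Type} (step : S → Option E → S → Prop) : ℕ → S → List E → S → Prop
  | nil (s : S) : TracesN step 0 s [] s
  | event {k : ℕ} {s₁ s₂ s₃ : S} {e : E} {t : List E} :
      step s₁ (some e) s₂ → TracesN step k s₂ t s₃ → TracesN step (k + 1) s₁ (e :: t) s₃
  | silent {k : ℕ} {s₁ s₂ s₃ : S} {t : List E} :
      step s₁ none s₂ → TracesN step k s₂ t s₃ → TracesN step (k + 1) s₁ t s₃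

theorem traces_toN {S E : Type} {step : S → Option E → S → Prop} {s t s'} :
    Traces step s t s' → ∃ k, TracesN step k s t s' := by
  intro h
  induction h with
  | nil s => exact ⟨0, .nil s⟩
  | event hs _ ih => obtain ⟨k, hk⟩ := ih; exact ⟨k + 1, .event hs hk⟩
  | silent hs _ ih => obtain ⟨k, hk⟩ := ih; exact ⟨k + 1, .silent hs hk⟩

theorem kstep_det {ι φ : InstrMem} {s : CState} (hp : s.priv = true) {α₁ α₂ : Option CAtom}
    {s₁ s₂ : CState} (h1 : CStep ι φ s α₁ s₁) (h2 : CStep ι φ s α₂ s₂) :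
    α₁ = none ∧ α₂ = none ∧ s₁ = s₂ := by
  cases h1 <;> cases h2 <;> simp_all

theorem handler_stuck (CL : ConcreteLattice L) (R : RuleTable) {ι : InstrMem}
    {κ μ : ℤ → Option CAtom} {σ : List CStkElt} {t : ℤ} {α : Option CAtom} {s' : CState} :
    ¬ CStep ι (handlerMem CL R) ⟨true, κ, μ, σ, ⟨-1, t⟩⟩ α s' := by
  intro h
  have hnone : handlerMem CL R (-1) = none := by norm_num [handlerMem]
  cases h <;> simp_all

theorem replay {ι φ : InstrMem} {s₁ s₂ : CState} (hps : PrivSteps ι φ s₁ s₂) :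
    ∀ {k : ℕ} {t : List CAtom} {sf : InstrMem × CState},
      TracesN (CStepP φ) k (ι, s₁) t sf →
      t = [] ∨ ∃ k' ≤ k, TracesN (CStepP φ) k' (ι, s₂) t sf := by
  induction hps with
  | refl s => intro k t sf h; exact Or.inr ⟨k, le_refl k, h⟩
  | @step sa sb sc hp hs _ ih =>
    intro k t sf h
    cases h with
    | nil => exact Or.inl rfl
    | event hstep htail =>
      obtain ⟨h1, h2⟩ := hstep
      obtain ⟨hc, -, -⟩ := kstep_det hp h2 hs
      exact absurd hc (by simp)
    | @silent k' _ s'' _ _ hstep htail =>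
      obtain ⟨h1, h2⟩ := hstep
      obtain ⟨-, -, heq⟩ := kstep_det hp h2 hs
      have hs'' : s'' = (ι, sb) := by
        obtain ⟨a, b⟩ := s''
        simp only [Prod.mk.injEq]
        exact ⟨h1, heq⟩
      rw [hs''] at htail
      rcases ih htail with h | ⟨k'', hk, h⟩
      · exact Or.inl h
      · exact Or.inr ⟨k'', le_trans hk (Nat.le_succ k'), h⟩

theorem encOp_ne_illegal : ∀ op : Opcode, encOp op ≠ -1 := by
  intro op; cases op <;> norm_num [encOp]

theorem tag_inj (CL : ConcreteLattice L) {l₁ l₂ : L} (h : CL.Tag l₁ = CL.Tag l₂) : l₁ = l₂ := by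
  have := congrArg CL.Lab h
  rwa [CL.labTag, CL.labTag] at this

/-- Which tags are `Tag`-encodings of which labels, per used input slot. -/
def UsedOK (CL : ConcreteLattice L) : Opcode → ℤ × ℤ × ℤ × ℤ → L × L × L × L → Prop
  | .add, t, l => t.1 = CL.Tag l.1 ∧ t.2.1 = CL.Tag l.2.1 ∧ t.2.2.1 = CL.Tag l.2.2.1
  | .load, t, l => t.1 = CL.Tag l.1 ∧ t.2.1 = CL.Tag l.2.1 ∧ t.2.2.1 = CL.Tag l.2.2.1
  | .store, t, l => t.1 = CL.Tag l.1 ∧ t.2.1 = CL.Tag l.2.1 ∧ t.2.2.1 = CL.Tag l.2.2.1 ∧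
      t.2.2.2 = CL.Tag l.2.2.2
  | .push, t, l => t.1 = CL.Tag l.1
  | .jump, t, l => t.1 = CL.Tag l.1 ∧ t.2.1 = CL.Tag l.2.1
  | .bnz, t, l => t.1 = CL.Tag l.1 ∧ t.2.1 = CL.Tag l.2.1
  | .call, t, l => t.1 = CL.Tag l.1 ∧ t.2.1 = CL.Tag l.2.1
  | .output, t, l => t.1 = CL.Tag l.1 ∧ t.2.1 = CL.Tag l.2.1
  | .ret, t, l => t.2.1 = CL.Tag l.2.1

/-- The cache invariant. -/
def CInv (CL : ConcreteLattice L) (κ : ℤ → Option CAtom) : Prop :=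
  ∀ (op : Opcode) (tpc t1 t2 t3 : ℤ), cacheIn κ (encOp op) tpc t1 t2 t3 →
  ∀ lpc l1 l2 l3 : L, UsedOK CL op (tpc, t1, t2, t3) (lpc, l1, l2, l3) →
  ∃ Lrpc Lr : L, Judge RabsTable (lpc, l1, l2, l3) op Lrpc Lr ∧
    cacheOut κ (CL.Tag Lrpc) (CL.Tag Lr)

theorem CInv_init (CL : ConcreteLattice L) : CInv CL initCache := by
  intro op tpc t1 t2 t3 hin
  exfalso
  have h0 := hin.1
  have : initCache 0 = some ⟨-1, TD⟩ := by norm_num [initCache]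
  rw [this] at h0
  exact encOp_ne_illegal op (by injection h0 with h; injection h with h1 h2; exact h1.symm)

theorem CInv_upd (CL : ConcreteLattice L) (κ₀ : ℤ → Option CAtom) (op : Opcode)
    (Lpc L₁ L₂ L₃ : L) (tpc t1 t2 t3 : ℤ)
    (hU : UsedOK CL op (tpc, t1, t2, t3) (Lpc, L₁, L₂, L₃))
    (hA : evalB (Lpc, L₁, L₂, L₃) (RabsTable op).allow) :
    CInv CL (updC (updC (installCache κ₀ (encOp op) tpc t1 t2 t3) addrTagR
        ⟨CL.Tag (evalL (Lpc, L₁, L₂, L₃) (RabsTable op).res), TD⟩) addrTagRpc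
        ⟨CL.Tag (evalL (Lpc, L₁, L₂, L₃) (RabsTable op).rpc), TD⟩) := by
  intro op' tpc' t1' t2' t3' hin lpc' l1' l2' l3' hU'
  obtain ⟨h0, h1, h2, h3, h4⟩ := hin
  simp only [updC, addrTagRpc, addrTagR, installCache] at h0 h1 h2 h3 h4
  norm_num at h0 h1 h2 h3 h4
  have hopeq := encOp_inj _ _ h0
  subst hopeq
  subst h1
  subst h2
  subst h3
  subst h4
  refine ⟨evalL (Lpc, L₁, L₂, L₃) (RabsTable op).rpc, evalL (Lpc, L₁, L₂, L₃) (RabsTable op).res,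
    ?_, ?_, ?_⟩
  · -- Judge at the primed labels
    cases op <;>
      (simp only [UsedOK] at hU hU') <;>
      simp only [Judge, RabsTable, evalB, evalL] <;>
      first
        | (obtain ⟨e1, e2, e3, e4⟩ := hU
           obtain ⟨f1, f2, f3, f4⟩ := hU'
           obtain rfl := tag_inj CL (e1.symm.trans f1)
           obtain rfl := tag_inj CL (e2.symm.trans f2)
           obtain rfl := tag_inj CL (e3.symm.trans f3)
           obtain rfl := tag_inj CL (e4.symm.trans f4)
           exact ⟨by simpa [evalB, evalL, RabsTable] using hA, by simp, by simp⟩)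
        | (obtain ⟨e1, e2, e3⟩ := hU
           obtain ⟨f1, f2, f3⟩ := hU'
           obtain rfl := tag_inj CL (e1.symm.trans f1)
           obtain rfl := tag_inj CL (e2.symm.trans f2)
           obtain rfl := tag_inj CL (e3.symm.trans f3)
           exact ⟨trivial, by simp, by simp⟩)
        | (obtain ⟨e1, e2⟩ := hU
           obtain ⟨f1, f2⟩ := hU'
           obtain rfl := tag_inj CL (e1.symm.trans f1)
           obtain rfl := tag_inj CL (e2.symm.trans f2)
           exact ⟨trivial, by simp, by simp⟩)
        | (obtain rfl := tag_inj CL (hU.symm.trans hU')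
           exact ⟨trivial, by simp, by simp⟩)
  · simp [updC, addrTagRpc]
  · simp [updC, addrTagRpc, addrTagR]

theorem cacheOut_det {κ : ℤ → Option CAtom} {a b c d : ℤ}
    (h1 : cacheOut κ a b) (h2 : cacheOut κ c d) : a = c ∧ b = d := by
  obtain ⟨x1, y1⟩ := h1
  obtain ⟨x2, y2⟩ := h2
  rw [x1] at x2; rw [y1] at y2
  simp only [Option.some.injEq, CAtom.mk.injEq] at x2 y2
  exact ⟨x2.1, y2.1⟩

end Dev6
section Dev7
variable {L : Type} [SemilatticeSup L] [OrderBot L]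

theorem stk_inv_data {CL : ConcreteLattice L} {σa : List (StkElt L)} {c : CAtom}
    {σc : List CStkElt} (h : List.Forall₂ (MatchStk CL) σa (.data c :: σc)) :
    ∃ a σa', σa = .data a :: σa' ∧ c.val = a.val ∧ c.tag = CL.Tag a.lab ∧
      List.Forall₂ (MatchStk CL) σa' σc := by
  cases h with
  | cons hm ht =>
    cases hm with
    | data hma =>
      obtain ⟨v, t⟩ := c
      cases hma
      exact ⟨_, _, rfl, rfl, rfl, ht⟩

theorem stk_inv_ret {CL : ConcreteLattice L} {σa : List (StkElt L)} {c : CAtom}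
    {σc : List CStkElt} (h : List.Forall₂ (MatchStk CL) σa (.ret c false :: σc)) :
    ∃ a σa', σa = .ret a :: σa' ∧ c.val = a.val ∧ c.tag = CL.Tag a.lab ∧
      List.Forall₂ (MatchStk CL) σa' σc := by
  cases h with
  | cons hm ht =>
    cases hm with
    | ret hma =>
      obtain ⟨v, t⟩ := c
      cases hma
      exact ⟨_, _, rfl, rfl, rfl, ht⟩

theorem rel_some_inv {α β : Type} {R : α → β → Prop} {x : Option α} {b : β}
    (h : Option.Rel R x (some b)) : ∃ a, x = some a ∧ R a b := by
  cases h with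
  | some hr => exact ⟨_, rfl, hr⟩

def SimRel (CL : ConcreteLattice L) (as : AState L) (cs : CState) : Prop :=
  cs.priv = false ∧ CInv CL cs.kmem ∧
  (∀ p, Option.Rel (matchAtomC CL) (as.mem p) (cs.umem p)) ∧
  List.Forall₂ (MatchStk CL) as.stk cs.stk ∧
  cs.pc = ⟨as.pc.val, CL.Tag as.pc.lab⟩

theorem stuck_trace {CL : ConcreteLattice L} {R : RuleTable} {k : ℕ} {ι : InstrMem}
    {κ μ : ℤ → Option CAtom} {σ : List CStkElt} {tg : ℤ} {t₂ : List CAtom}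
    {sf : InstrMem × CState}
    (h : TracesN (CStepP (handlerMem CL R)) k (ι, (⟨true, κ, μ, σ, ⟨-1, tg⟩⟩ : CState)) t₂ sf) :
    t₂ = [] := by
  cases h with
  | nil => rfl
  | event hs _ => exact absurd hs.2 (handler_stuck CL R)
  | silent hs _ => exact absurd hs.2 (handler_stuck CL R)

theorem sim (CL : ConcreteLattice L) :
    ∀ k : ℕ, ∀ (ι : InstrMem) (as : AState L) (cs : CState) (t₂ : List CAtom)
      (sf : InstrMem × CState),
      TracesN (CStepP (handlerMem CL RabsTable)) k (ι, cs) t₂ sf →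
      SimRel CL as cs →
      ∃ t₁ s', Traces (AStepP (L := L)) (ι, as) t₁ s' ∧ List.Forall₂ (matchAtomC CL) t₁ t₂ := by
  intro k
  induction k using Nat.strong_induction_on with
  | _ k IH =>
  intro ι as cs t₂ sf htr hrel
  obtain ⟨hpriv, hinv, hmem, hstk, hpc⟩ := hrel
  obtain ⟨μa, σa, pca⟩ := as
  obtain ⟨pv, pl⟩ := pca
  cases htr with
  | nil => exact ⟨[], _, .nil _, .nil⟩
  | @event k0 _ s₂ _ e t' hstep htail =>
    obtain ⟨ι₂, cs₂⟩ := s₂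
    obtain ⟨h1, h2⟩ := hstep
    rw [show ι₂ = ι from h1] at htail
    clear h1
    cases h2 with
    | @outputH κc μc σc n m Tpc T₁ Trpc Tr hi hci hco =>
      obtain rfl : pv = n := (congrArg CAtom.val hpc).symm
      obtain rfl : Tpc = CL.Tag pl := congrArg CAtom.tag hpc
      obtain ⟨a₁, σ₁, rfl, hv1, ht1, hstk'⟩ := stk_inv_data hstk
      obtain rfl : m = a₁.val := hv1
      obtain rfl : T₁ = CL.Tag a₁.lab := ht1
      obtain ⟨Lrpc, Lr, hJ, hout⟩ := hinv .output _ _ _ _ hci pl a₁.lab ⊥ ⊥ ⟨rfl, rfl⟩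
      obtain ⟨-, hrpc, hres⟩ := hJ
      obtain ⟨rfl, rfl⟩ := cacheOut_det hco hout
      obtain rfl : pl = Lrpc := hrpc
      obtain rfl : a₁.lab ⊔ pl = Lr := hres
      obtain ⟨t₁, s', htr', hf⟩ := IH k0 (Nat.lt_succ_self _) ι
        ⟨μa, σ₁, ⟨pv + 1, pl⟩⟩ ⟨false, κc, μc, σc, ⟨pv + 1, CL.Tag pl⟩⟩ t' sf htail
        ⟨rfl, hinv, hmem, hstk', rfl⟩
      exact ⟨⟨a₁.val, a₁.lab ⊔ pl⟩ :: t₁, s',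
        Traces.event (s₂ := (ι, ⟨μa, σ₁, ⟨pv + 1, pl⟩⟩)) ⟨rfl, .output hi⟩ htr', .cons rfl hf⟩
  | @silent k0 _ s₂ _ _ hstep htail =>
    obtain ⟨ι₂, cs₂⟩ := s₂
    obtain ⟨h1, h2⟩ := hstep
    rw [show ι₂ = ι from h1] at htail
    clear h1
    cases h2 with
    | @addH κc μc σc n n₁ n₂ Tpc T₁ T₂ Trpc Tr hi hci hco =>
      obtain rfl : pv = n := (congrArg CAtom.val hpc).symm
      obtain rfl : Tpc = CL.Tag pl := congrArg CAtom.tag hpc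
      obtain ⟨a₁, σ₁, rfl, hv1, ht1, h'⟩ := stk_inv_data hstk
      obtain ⟨a₂, σ₂, rfl, hv2, ht2, hstk'⟩ := stk_inv_data h'
      obtain rfl : n₁ = a₁.val := hv1
      obtain rfl : T₁ = CL.Tag a₁.lab := ht1
      obtain rfl : n₂ = a₂.val := hv2
      obtain rfl : T₂ = CL.Tag a₂.lab := ht2
      obtain ⟨Lrpc, Lr, hJ, hout⟩ := hinv .add _ _ _ _ hci pl a₁.lab a₂.lab ⊥ ⟨rfl, rfl, rfl⟩
      obtain ⟨-, hrpc, hres⟩ := hJ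
      obtain ⟨rfl, rfl⟩ := cacheOut_det hco hout
      obtain rfl : pl = Lrpc := hrpc
      obtain rfl : a₁.lab ⊔ a₂.lab = Lr := hres
      obtain ⟨t₁, s', htr', hf⟩ := IH k0 (Nat.lt_succ_self _) ι
        ⟨μa, .data ⟨a₁.val + a₂.val, a₁.lab ⊔ a₂.lab⟩ :: σ₂, ⟨pv + 1, pl⟩⟩
        ⟨false, κc, μc, .data ⟨a₁.val + a₂.val, CL.Tag (a₁.lab ⊔ a₂.lab)⟩ :: σc,
          ⟨pv + 1, CL.Tag pl⟩⟩ t₂ sf htail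
        ⟨rfl, hinv, hmem, .cons (.data rfl) hstk', rfl⟩
      exact ⟨t₁, s', Traces.silent
        (s₂ := (ι, ⟨μa, .data ⟨a₁.val + a₂.val, a₁.lab ⊔ a₂.lab⟩ :: σ₂, ⟨pv + 1, pl⟩⟩))
        ⟨rfl, .add hi⟩ htr', hf⟩
    | @addM κc μc σc n n₁ n₂ Tpc T₁ T₂ hi hnci =>
      obtain rfl : pv = n := (congrArg CAtom.val hpc).symm
      obtain rfl : Tpc = CL.Tag pl := congrArg CAtom.tag hpc
      obtain ⟨a₁, σ₁, rfl, hv1, ht1, h'⟩ := stk_inv_data hstk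
      obtain ⟨a₂, σ₂, rfl, hv2, ht2, hstk'⟩ := stk_inv_data h'
      obtain rfl : n₁ = a₁.val := hv1
      obtain rfl : T₁ = CL.Tag a₁.lab := ht1
      obtain rfl : n₂ = a₂.val := hv2
      obtain rfl : T₂ = CL.Tag a₂.lab := ht2
      have hrun := (handler_run CL ι μc
        (.data ⟨a₁.val, CL.Tag a₁.lab⟩ :: .data ⟨a₂.val, CL.Tag a₂.lab⟩ :: σc) pv (CL.Tag pl)
        .add (pl, a₁.lab, a₂.lab, ⊥)
        (installCache κc (encOp .add) (CL.Tag pl) (CL.Tag a₁.lab) (CL.Tag a₂.lab) TD)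
        (by norm_num [installCache, addrOpLabel])
        trivial
        (by norm_num [okL, RabsTable, installCache, addrTagPC])
        (by norm_num [okL, RabsTable, installCache, addrTag1, addrTag2])).1 trivial
      rcases replay hrun htail with rfl | ⟨k', hk', htr'⟩
      · exact ⟨[], _, .nil _, .nil⟩
      · exact IH k' (lt_of_le_of_lt hk' (Nat.lt_succ_self _)) ι
          ⟨μa, .data a₁ :: .data a₂ :: σ₂, ⟨pv, pl⟩⟩ _ t₂ sf htr'
          ⟨rfl, CInv_upd CL κc .add pl a₁.lab a₂.lab ⊥ (CL.Tag pl) (CL.Tag a₁.lab)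
              (CL.Tag a₂.lab) TD ⟨rfl, rfl, rfl⟩ trivial,
            hmem, .cons (.data rfl) (.cons (.data rfl) hstk'), rfl⟩
    | @pushH κc μc σc n m Tpc Trpc Tr hi hci hco =>
      obtain rfl : pv = n := (congrArg CAtom.val hpc).symm
      obtain rfl : Tpc = CL.Tag pl := congrArg CAtom.tag hpc
      obtain ⟨Lrpc, Lr, hJ, hout⟩ := hinv .push _ _ _ _ hci pl ⊥ ⊥ ⊥ rfl
      obtain ⟨-, hrpc, hres⟩ := hJ
      obtain ⟨rfl, rfl⟩ := cacheOut_det hco hout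
      obtain rfl : pl = Lrpc := hrpc
      obtain rfl : (⊥ : L) = Lr := hres
      obtain ⟨t₁, s', htr', hf⟩ := IH k0 (Nat.lt_succ_self _) ι
        ⟨μa, .data ⟨m, ⊥⟩ :: σa, ⟨pv + 1, pl⟩⟩
        ⟨false, κc, μc, .data ⟨m, CL.Tag ⊥⟩ :: σc, ⟨pv + 1, CL.Tag pl⟩⟩ t₂ sf htail
        ⟨rfl, hinv, hmem, .cons (.data rfl) hstk, rfl⟩
      exact ⟨t₁, s', Traces.silent (s₂ := (ι, ⟨μa, .data ⟨m, ⊥⟩ :: σa, ⟨pv + 1, pl⟩⟩))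
        ⟨rfl, .push hi⟩ htr', hf⟩
    | @loadH κc μc σc n p m Tpc T₁ T₂ Trpc Tr hi hμ hci hco =>
      obtain rfl : pv = n := (congrArg CAtom.val hpc).symm
      obtain rfl : Tpc = CL.Tag pl := congrArg CAtom.tag hpc
      obtain ⟨a₁, σ₁, rfl, hv1, ht1, hstk'⟩ := stk_inv_data hstk
      obtain rfl : p = a₁.val := hv1
      obtain rfl : T₁ = CL.Tag a₁.lab := ht1
      have hm : Option.Rel (matchAtomC CL) (μa a₁.val) (μc a₁.val) := hmem a₁.val
      rw [hμ] at hm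
      obtain ⟨am, hμa, hma⟩ := rel_some_inv hm
      obtain rfl : m = am.val := congrArg CAtom.val hma
      obtain rfl : T₂ = CL.Tag am.lab := congrArg CAtom.tag hma
      obtain ⟨Lrpc, Lr, hJ, hout⟩ := hinv .load _ _ _ _ hci pl a₁.lab am.lab ⊥ ⟨rfl, rfl, rfl⟩
      obtain ⟨-, hrpc, hres⟩ := hJ
      obtain ⟨rfl, rfl⟩ := cacheOut_det hco hout
      obtain rfl : pl = Lrpc := hrpc
      obtain rfl : a₁.lab ⊔ am.lab = Lr := hres
      obtain ⟨t₁, s', htr', hf⟩ := IH k0 (Nat.lt_succ_self _) ι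
        ⟨μa, .data ⟨am.val, a₁.lab ⊔ am.lab⟩ :: σ₁, ⟨pv + 1, pl⟩⟩
        ⟨false, κc, μc, .data ⟨am.val, CL.Tag (a₁.lab ⊔ am.lab)⟩ :: σc,
          ⟨pv + 1, CL.Tag pl⟩⟩ t₂ sf htail
        ⟨rfl, hinv, hmem, .cons (.data rfl) hstk', rfl⟩
      exact ⟨t₁, s', Traces.silent
        (s₂ := (ι, ⟨μa, .data ⟨am.val, a₁.lab ⊔ am.lab⟩ :: σ₁, ⟨pv + 1, pl⟩⟩))
        ⟨rfl, .load hi hμa⟩ htr', hf⟩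
    | @storeH κc μc σc n p m k' Tpc T₁ T₂ T₃ Trpc Tr hi hμ hci hco =>
      obtain rfl : pv = n := (congrArg CAtom.val hpc).symm
      obtain rfl : Tpc = CL.Tag pl := congrArg CAtom.tag hpc
      obtain ⟨a₁, σ₁, rfl, hv1, ht1, h'⟩ := stk_inv_data hstk
      obtain ⟨a₂, σ₂, rfl, hv2, ht2, hstk'⟩ := stk_inv_data h'
      obtain rfl : p = a₁.val := hv1
      obtain rfl : T₁ = CL.Tag a₁.lab := ht1
      obtain rfl : m = a₂.val := hv2
      obtain rfl : T₂ = CL.Tag a₂.lab := ht2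
      have hm : Option.Rel (matchAtomC CL) (μa a₁.val) (μc a₁.val) := hmem a₁.val
      rw [hμ] at hm
      obtain ⟨am, hμa, hma⟩ := rel_some_inv hm
      obtain rfl : k' = am.val := congrArg CAtom.val hma
      obtain rfl : T₃ = CL.Tag am.lab := congrArg CAtom.tag hma
      obtain ⟨Lrpc, Lr, hJ, hout⟩ := hinv .store _ _ _ _ hci pl a₁.lab a₂.lab am.lab
        ⟨rfl, rfl, rfl, rfl⟩
      obtain ⟨hallow, hrpc, hres⟩ := hJ
      have hallow' : a₁.lab ⊔ pl ≤ am.lab := hallow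
      obtain ⟨rfl, rfl⟩ := cacheOut_det hco hout
      obtain rfl : pl = Lrpc := hrpc
      obtain rfl : a₁.lab ⊔ a₂.lab ⊔ pl = Lr := hres
      have hmem' : ∀ q, Option.Rel (matchAtomC CL)
          (updMem μa a₁.val ⟨a₂.val, a₁.lab ⊔ a₂.lab ⊔ pl⟩ q)
          (updC μc a₁.val ⟨a₂.val, CL.Tag (a₁.lab ⊔ a₂.lab ⊔ pl)⟩ q) := by
        intro q
        by_cases hq : q = a₁.val
        · simp only [updMem, updC, if_pos hq]
          exact .some rfl
        · simp only [updMem, updC, if_neg hq]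
          exact hmem q
      obtain ⟨t₁, s', htr', hf⟩ := IH k0 (Nat.lt_succ_self _) ι
        ⟨updMem μa a₁.val ⟨a₂.val, a₁.lab ⊔ a₂.lab ⊔ pl⟩, σ₂, ⟨pv + 1, pl⟩⟩
        ⟨false, κc, updC μc a₁.val ⟨a₂.val, CL.Tag (a₁.lab ⊔ a₂.lab ⊔ pl)⟩, σc,
          ⟨pv + 1, CL.Tag pl⟩⟩ t₂ sf htail
        ⟨rfl, hinv, hmem', hstk', rfl⟩
      exact ⟨t₁, s', Traces.silent
        (s₂ := (ι, ⟨updMem μa a₁.val ⟨a₂.val, a₁.lab ⊔ a₂.lab ⊔ pl⟩, σ₂, ⟨pv + 1, pl⟩⟩))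
        ⟨rfl, .store hi hμa hallow'⟩ htr', hf⟩
    | @jumpH κc μc σc n n' Tpc T₁ Trpc Tr hi hci hco =>
      obtain rfl : pv = n := (congrArg CAtom.val hpc).symm
      obtain rfl : Tpc = CL.Tag pl := congrArg CAtom.tag hpc
      obtain ⟨a₁, σ₁, rfl, hv1, ht1, hstk'⟩ := stk_inv_data hstk
      obtain rfl : n' = a₁.val := hv1
      obtain rfl : T₁ = CL.Tag a₁.lab := ht1
      obtain ⟨Lrpc, Lr, hJ, hout⟩ := hinv .jump _ _ _ _ hci pl a₁.lab ⊥ ⊥ ⟨rfl, rfl⟩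
      obtain ⟨-, hrpc, hres⟩ := hJ
      obtain ⟨rfl, rfl⟩ := cacheOut_det hco hout
      obtain rfl : a₁.lab ⊔ pl = Lrpc := hrpc
      obtain ⟨t₁, s', htr', hf⟩ := IH k0 (Nat.lt_succ_self _) ι
        ⟨μa, σ₁, ⟨a₁.val, a₁.lab ⊔ pl⟩⟩
        ⟨false, κc, μc, σc, ⟨a₁.val, CL.Tag (a₁.lab ⊔ pl)⟩⟩ t₂ sf htail
        ⟨rfl, hinv, hmem, hstk', rfl⟩
      exact ⟨t₁, s', Traces.silent (s₂ := (ι, ⟨μa, σ₁, ⟨a₁.val, a₁.lab ⊔ pl⟩⟩))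
        ⟨rfl, .jump hi⟩ htr', hf⟩
    | @bnzH κc μc σc n m k' Tpc T₁ Trpc Tr hi hci hco =>
      obtain rfl : pv = n := (congrArg CAtom.val hpc).symm
      obtain rfl : Tpc = CL.Tag pl := congrArg CAtom.tag hpc
      obtain ⟨a₁, σ₁, rfl, hv1, ht1, hstk'⟩ := stk_inv_data hstk
      obtain rfl : m = a₁.val := hv1
      obtain rfl : T₁ = CL.Tag a₁.lab := ht1
      obtain ⟨Lrpc, Lr, hJ, hout⟩ := hinv .bnz _ _ _ _ hci pl a₁.lab ⊥ ⊥ ⟨rfl, rfl⟩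
      obtain ⟨-, hrpc, hres⟩ := hJ
      obtain ⟨rfl, rfl⟩ := cacheOut_det hco hout
      obtain rfl : a₁.lab ⊔ pl = Lrpc := hrpc
      obtain ⟨t₁, s', htr', hf⟩ := IH k0 (Nat.lt_succ_self _) ι
        ⟨μa, σ₁, ⟨pv + (if a₁.val = 0 then 1 else k'), a₁.lab ⊔ pl⟩⟩
        ⟨false, κc, μc, σc, ⟨pv + (if a₁.val = 0 then 1 else k'), CL.Tag (a₁.lab ⊔ pl)⟩⟩
        t₂ sf htail ⟨rfl, hinv, hmem, hstk', rfl⟩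
      exact ⟨t₁, s', Traces.silent
        (s₂ := (ι, ⟨μa, σ₁, ⟨pv + (if a₁.val = 0 then 1 else k'), a₁.lab ⊔ pl⟩⟩))
        ⟨rfl, .bnz hi⟩ htr', hf⟩
    | @callH κc μc σc n n' Tpc T₁ Trpc Tr hi hci hco =>
      obtain rfl : pv = n := (congrArg CAtom.val hpc).symm
      obtain rfl : Tpc = CL.Tag pl := congrArg CAtom.tag hpc
      obtain ⟨a₁, σ₁, rfl, hv1, ht1, hstk'⟩ := stk_inv_data hstk
      obtain rfl : n' = a₁.val := hv1
      obtain rfl : T₁ = CL.Tag a₁.lab := ht1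
      obtain ⟨Lrpc, Lr, hJ, hout⟩ := hinv .call _ _ _ _ hci pl a₁.lab ⊥ ⊥ ⟨rfl, rfl⟩
      obtain ⟨-, hrpc, hres⟩ := hJ
      obtain ⟨rfl, rfl⟩ := cacheOut_det hco hout
      obtain rfl : a₁.lab ⊔ pl = Lrpc := hrpc
      obtain rfl : pl = Lr := hres
      obtain ⟨t₁, s', htr', hf⟩ := IH k0 (Nat.lt_succ_self _) ι
        ⟨μa, .ret ⟨pv + 1, pl⟩ :: σ₁, ⟨a₁.val, a₁.lab ⊔ pl⟩⟩
        ⟨false, κc, μc, .ret ⟨pv + 1, CL.Tag pl⟩ false :: σc,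
          ⟨a₁.val, CL.Tag (a₁.lab ⊔ pl)⟩⟩ t₂ sf htail
        ⟨rfl, hinv, hmem, .cons (.ret rfl) hstk', rfl⟩
      exact ⟨t₁, s', Traces.silent
        (s₂ := (ι, ⟨μa, .ret ⟨pv + 1, pl⟩ :: σ₁, ⟨a₁.val, a₁.lab ⊔ pl⟩⟩))
        ⟨rfl, .call hi⟩ htr', hf⟩
    | @retH κc μc σc n m Tpc T₁ Trpc Tr hi hci hco =>
      obtain rfl : pv = n := (congrArg CAtom.val hpc).symm
      obtain rfl : Tpc = CL.Tag pl := congrArg CAtom.tag hpc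
      obtain ⟨a₁, σ₁, rfl, hv1, ht1, hstk'⟩ := stk_inv_ret hstk
      obtain rfl : m = a₁.val := hv1
      obtain rfl : T₁ = CL.Tag a₁.lab := ht1
      obtain ⟨Lrpc, Lr, hJ, hout⟩ := hinv .ret _ _ _ _ hci pl a₁.lab ⊥ ⊥ rfl
      obtain ⟨-, hrpc, hres⟩ := hJ
      obtain ⟨rfl, rfl⟩ := cacheOut_det hco hout
      obtain rfl : a₁.lab = Lrpc := hrpc
      obtain ⟨t₁, s', htr', hf⟩ := IH k0 (Nat.lt_succ_self _) ι
        ⟨μa, σ₁, ⟨a₁.val, a₁.lab⟩⟩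
        ⟨false, κc, μc, σc, ⟨a₁.val, CL.Tag a₁.lab⟩⟩ t₂ sf htail
        ⟨rfl, hinv, hmem, hstk', rfl⟩
      exact ⟨t₁, s', Traces.silent (s₂ := (ι, ⟨μa, σ₁, ⟨a₁.val, a₁.lab⟩⟩))
        ⟨rfl, .ret hi⟩ htr', hf⟩
    | @pushM κc μc σc n m Tpc hi hnci =>
      obtain rfl : pv = n := (congrArg CAtom.val hpc).symm
      obtain rfl : Tpc = CL.Tag pl := congrArg CAtom.tag hpc
      have hrun := (handler_run CL ι μc σc pv (CL.Tag pl)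
        .push (pl, ⊥, ⊥, ⊥)
        (installCache κc (encOp .push) (CL.Tag pl) TD TD TD)
        (by norm_num [installCache, addrOpLabel])
        trivial
        (by norm_num [okL, RabsTable, installCache, addrTagPC])
        trivial).1 trivial
      rcases replay hrun htail with rfl | ⟨k', hk', htr'⟩
      · exact ⟨[], _, .nil _, .nil⟩
      · exact IH k' (lt_of_le_of_lt hk' (Nat.lt_succ_self _)) ι
          ⟨μa, σa, ⟨pv, pl⟩⟩ _ t₂ sf htr'
          ⟨rfl, CInv_upd CL κc .push pl ⊥ ⊥ ⊥ (CL.Tag pl) TD TD TD rfl trivial,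
            hmem, hstk, rfl⟩
    | @loadM κc μc σc n p m Tpc T₁ T₂ hi hμ hnci =>
      obtain rfl : pv = n := (congrArg CAtom.val hpc).symm
      obtain rfl : Tpc = CL.Tag pl := congrArg CAtom.tag hpc
      obtain ⟨a₁, σ₁, rfl, hv1, ht1, hstk'⟩ := stk_inv_data hstk
      obtain rfl : p = a₁.val := hv1
      obtain rfl : T₁ = CL.Tag a₁.lab := ht1
      have hm : Option.Rel (matchAtomC CL) (μa a₁.val) (μc a₁.val) := hmem a₁.val
      rw [hμ] at hm
      obtain ⟨am, hμa, hma⟩ := rel_some_inv hm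
      obtain rfl : m = am.val := congrArg CAtom.val hma
      obtain rfl : T₂ = CL.Tag am.lab := congrArg CAtom.tag hma
      have hrun := (handler_run CL ι μc (.data ⟨a₁.val, CL.Tag a₁.lab⟩ :: σc) pv (CL.Tag pl)
        .load (pl, a₁.lab, am.lab, ⊥)
        (installCache κc (encOp .load) (CL.Tag pl) (CL.Tag a₁.lab) (CL.Tag am.lab) TD)
        (by norm_num [installCache, addrOpLabel])
        trivial
        (by norm_num [okL, RabsTable, installCache, addrTagPC])
        (by norm_num [okL, RabsTable, installCache, addrTag1, addrTag2])).1 trivial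
      rcases replay hrun htail with rfl | ⟨k', hk', htr'⟩
      · exact ⟨[], _, .nil _, .nil⟩
      · exact IH k' (lt_of_le_of_lt hk' (Nat.lt_succ_self _)) ι
          ⟨μa, .data a₁ :: σ₁, ⟨pv, pl⟩⟩ _ t₂ sf htr'
          ⟨rfl, CInv_upd CL κc .load pl a₁.lab am.lab ⊥ (CL.Tag pl) (CL.Tag a₁.lab)
              (CL.Tag am.lab) TD ⟨rfl, rfl, rfl⟩ trivial,
            hmem, .cons (.data rfl) hstk', rfl⟩
    | @storeM κc μc σc n p m k' Tpc T₁ T₂ T₃ hi hμ hnci =>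
      obtain rfl : pv = n := (congrArg CAtom.val hpc).symm
      obtain rfl : Tpc = CL.Tag pl := congrArg CAtom.tag hpc
      obtain ⟨a₁, σ₁, rfl, hv1, ht1, h'⟩ := stk_inv_data hstk
      obtain ⟨a₂, σ₂, rfl, hv2, ht2, hstk'⟩ := stk_inv_data h'
      obtain rfl : p = a₁.val := hv1
      obtain rfl : T₁ = CL.Tag a₁.lab := ht1
      obtain rfl : m = a₂.val := hv2
      obtain rfl : T₂ = CL.Tag a₂.lab := ht2
      have hm : Option.Rel (matchAtomC CL) (μa a₁.val) (μc a₁.val) := hmem a₁.val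
      rw [hμ] at hm
      obtain ⟨am, hμa, hma⟩ := rel_some_inv hm
      obtain rfl : k' = am.val := congrArg CAtom.val hma
      obtain rfl : T₃ = CL.Tag am.lab := congrArg CAtom.tag hma
      have hhr := handler_run CL ι μc
        (.data ⟨a₁.val, CL.Tag a₁.lab⟩ :: .data ⟨a₂.val, CL.Tag a₂.lab⟩ :: σc) pv (CL.Tag pl)
        .store (pl, a₁.lab, a₂.lab, am.lab)
        (installCache κc (encOp .store) (CL.Tag pl) (CL.Tag a₁.lab) (CL.Tag a₂.lab)
          (CL.Tag am.lab))
        (by norm_num [installCache, addrOpLabel])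
        (by norm_num [okB, okL, RabsTable, installCache, addrTagPC, addrTag1, addrTag3])
        (by norm_num [okL, RabsTable, installCache, addrTagPC])
        (by norm_num [okL, RabsTable, installCache, addrTagPC, addrTag1, addrTag2])
      by_cases hA : a₁.lab ⊔ pl ≤ am.lab
      · have hrun := hhr.1 hA
        rcases replay hrun htail with rfl | ⟨k', hk', htr'⟩
        · exact ⟨[], _, .nil _, .nil⟩
        · exact IH k' (lt_of_le_of_lt hk' (Nat.lt_succ_self _)) ι
            ⟨μa, .data a₁ :: .data a₂ :: σ₂, ⟨pv, pl⟩⟩ _ t₂ sf htr'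
            ⟨rfl, CInv_upd CL κc .store pl a₁.lab a₂.lab am.lab (CL.Tag pl) (CL.Tag a₁.lab)
                (CL.Tag a₂.lab) (CL.Tag am.lab) ⟨rfl, rfl, rfl, rfl⟩ hA,
              hmem, .cons (.data rfl) (.cons (.data rfl) hstk'), rfl⟩
      · have hrun := hhr.2 hA
        rcases replay hrun htail with rfl | ⟨k', hk', htr'⟩
        · exact ⟨[], _, .nil _, .nil⟩
        · obtain rfl := stuck_trace htr'
          exact ⟨[], _, .nil _, .nil⟩
    | @jumpM κc μc σc n n' Tpc T₁ hi hnci =>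
      obtain rfl : pv = n := (congrArg CAtom.val hpc).symm
      obtain rfl : Tpc = CL.Tag pl := congrArg CAtom.tag hpc
      obtain ⟨a₁, σ₁, rfl, hv1, ht1, hstk'⟩ := stk_inv_data hstk
      obtain rfl : n' = a₁.val := hv1
      obtain rfl : T₁ = CL.Tag a₁.lab := ht1
      have hrun := (handler_run CL ι μc (.data ⟨a₁.val, CL.Tag a₁.lab⟩ :: σc) pv (CL.Tag pl)
        .jump (pl, a₁.lab, ⊥, ⊥)
        (installCache κc (encOp .jump) (CL.Tag pl) (CL.Tag a₁.lab) TD TD)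
        (by norm_num [installCache, addrOpLabel])
        trivial
        (by norm_num [okL, RabsTable, installCache, addrTagPC, addrTag1])
        trivial).1 trivial
      rcases replay hrun htail with rfl | ⟨k', hk', htr'⟩
      · exact ⟨[], _, .nil _, .nil⟩
      · exact IH k' (lt_of_le_of_lt hk' (Nat.lt_succ_self _)) ι
          ⟨μa, .data a₁ :: σ₁, ⟨pv, pl⟩⟩ _ t₂ sf htr'
          ⟨rfl, CInv_upd CL κc .jump pl a₁.lab ⊥ ⊥ (CL.Tag pl) (CL.Tag a₁.lab) TD TD
              ⟨rfl, rfl⟩ trivial,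
            hmem, .cons (.data rfl) hstk', rfl⟩
    | @bnzM κc μc σc n m k' Tpc T₁ hi hnci =>
      obtain rfl : pv = n := (congrArg CAtom.val hpc).symm
      obtain rfl : Tpc = CL.Tag pl := congrArg CAtom.tag hpc
      obtain ⟨a₁, σ₁, rfl, hv1, ht1, hstk'⟩ := stk_inv_data hstk
      obtain rfl : m = a₁.val := hv1
      obtain rfl : T₁ = CL.Tag a₁.lab := ht1
      have hrun := (handler_run CL ι μc (.data ⟨a₁.val, CL.Tag a₁.lab⟩ :: σc) pv (CL.Tag pl)
        .bnz (pl, a₁.lab, ⊥, ⊥)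
        (installCache κc (encOp .bnz) (CL.Tag pl) (CL.Tag a₁.lab) TD TD)
        (by norm_num [installCache, addrOpLabel])
        trivial
        (by norm_num [okL, RabsTable, installCache, addrTagPC, addrTag1])
        trivial).1 trivial
      rcases replay hrun htail with rfl | ⟨k', hk', htr'⟩
      · exact ⟨[], _, .nil _, .nil⟩
      · exact IH k' (lt_of_le_of_lt hk' (Nat.lt_succ_self _)) ι
          ⟨μa, .data a₁ :: σ₁, ⟨pv, pl⟩⟩ _ t₂ sf htr'
          ⟨rfl, CInv_upd CL κc .bnz pl a₁.lab ⊥ ⊥ (CL.Tag pl) (CL.Tag a₁.lab) TD TD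
              ⟨rfl, rfl⟩ trivial,
            hmem, .cons (.data rfl) hstk', rfl⟩
    | @callM κc μc σc n n' Tpc T₁ hi hnci =>
      obtain rfl : pv = n := (congrArg CAtom.val hpc).symm
      obtain rfl : Tpc = CL.Tag pl := congrArg CAtom.tag hpc
      obtain ⟨a₁, σ₁, rfl, hv1, ht1, hstk'⟩ := stk_inv_data hstk
      obtain rfl : n' = a₁.val := hv1
      obtain rfl : T₁ = CL.Tag a₁.lab := ht1
      have hrun := (handler_run CL ι μc (.data ⟨a₁.val, CL.Tag a₁.lab⟩ :: σc) pv (CL.Tag pl)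
        .call (pl, a₁.lab, ⊥, ⊥)
        (installCache κc (encOp .call) (CL.Tag pl) (CL.Tag a₁.lab) TD TD)
        (by norm_num [installCache, addrOpLabel])
        trivial
        (by norm_num [okL, RabsTable, installCache, addrTagPC, addrTag1])
        (by norm_num [okL, RabsTable, installCache, addrTagPC])).1 trivial
      rcases replay hrun htail with rfl | ⟨k', hk', htr'⟩
      · exact ⟨[], _, .nil _, .nil⟩
      · exact IH k' (lt_of_le_of_lt hk' (Nat.lt_succ_self _)) ι
          ⟨μa, .data a₁ :: σ₁, ⟨pv, pl⟩⟩ _ t₂ sf htr'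
          ⟨rfl, CInv_upd CL κc .call pl a₁.lab ⊥ ⊥ (CL.Tag pl) (CL.Tag a₁.lab) TD TD
              ⟨rfl, rfl⟩ trivial,
            hmem, .cons (.data rfl) hstk', rfl⟩
    | @retM κc μc σc n m Tpc T₁ hi hnci =>
      obtain rfl : pv = n := (congrArg CAtom.val hpc).symm
      obtain rfl : Tpc = CL.Tag pl := congrArg CAtom.tag hpc
      obtain ⟨a₁, σ₁, rfl, hv1, ht1, hstk'⟩ := stk_inv_ret hstk
      obtain rfl : m = a₁.val := hv1
      obtain rfl : T₁ = CL.Tag a₁.lab := ht1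
      have hrun := (handler_run CL ι μc (.ret ⟨a₁.val, CL.Tag a₁.lab⟩ false :: σc) pv (CL.Tag pl)
        .ret (pl, a₁.lab, ⊥, ⊥)
        (installCache κc (encOp .ret) (CL.Tag pl) (CL.Tag a₁.lab) TD TD)
        (by norm_num [installCache, addrOpLabel])
        trivial
        (by norm_num [okL, RabsTable, installCache, addrTag1])
        trivial).1 trivial
      rcases replay hrun htail with rfl | ⟨k', hk', htr'⟩
      · exact ⟨[], _, .nil _, .nil⟩
      · exact IH k' (lt_of_le_of_lt hk' (Nat.lt_succ_self _)) ι
          ⟨μa, .ret a₁ :: σ₁, ⟨pv, pl⟩⟩ _ t₂ sf htr'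
          ⟨rfl, CInv_upd CL κc .ret pl a₁.lab ⊥ ⊥ (CL.Tag pl) (CL.Tag a₁.lab) TD TD
              rfl trivial,
            hmem, .cons (.ret rfl) hstk', rfl⟩
    | @outputM κc μc σc n m Tpc T₁ hi hnci =>
      obtain rfl : pv = n := (congrArg CAtom.val hpc).symm
      obtain rfl : Tpc = CL.Tag pl := congrArg CAtom.tag hpc
      obtain ⟨a₁, σ₁, rfl, hv1, ht1, hstk'⟩ := stk_inv_data hstk
      obtain rfl : m = a₁.val := hv1
      obtain rfl : T₁ = CL.Tag a₁.lab := ht1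
      have hrun := (handler_run CL ι μc (.data ⟨a₁.val, CL.Tag a₁.lab⟩ :: σc) pv (CL.Tag pl)
        .output (pl, a₁.lab, ⊥, ⊥)
        (installCache κc (encOp .output) (CL.Tag pl) (CL.Tag a₁.lab) TD TD)
        (by norm_num [installCache, addrOpLabel])
        trivial
        (by norm_num [okL, RabsTable, installCache, addrTagPC])
        (by norm_num [okL, RabsTable, installCache, addrTagPC, addrTag1])).1 trivial
      rcases replay hrun htail with rfl | ⟨k', hk', htr'⟩
      · exact ⟨[], _, .nil _, .nil⟩
      · exact IH k' (lt_of_le_of_lt hk' (Nat.lt_succ_self _)) ι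
          ⟨μa, .data a₁ :: σ₁, ⟨pv, pl⟩⟩ _ t₂ sf htr'
          ⟨rfl, CInv_upd CL κc .output pl a₁.lab ⊥ ⊥ (CL.Tag pl) (CL.Tag a₁.lab) TD TD
              ⟨rfl, rfl⟩ trivial,
            hmem, .cons (.data rfl) hstk', rfl⟩
    | addK hi => simp at hpriv
    | pushK hi => simp at hpriv
    | loadK hi hk => simp at hpriv
    | storeK hi => simp at hpriv
    | jumpK hi => simp at hpriv
    | bnzK hi => simp at hpriv
    | callK hi => simp at hpriv
    | retK hi => simp at hpriv

end Dev7
/-- The concrete machine running the fault handler compiled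
from `𝓡^abs` refines the abstract IFC machine through `(≈ⁱᶜ, ≈ᵉᶜ)`. -/
theorem concrete_refines_abstract {L : Type} [SemilatticeSup L] [OrderBot L]
    (CL : ConcreteLattice L) :
    ∀ (i : AInput L) (ic : CInput) (t₂ : List CAtom),
      matchInputC CL i ic →
      Emits (CStepP (handlerMem CL RabsTable)) (cInit ic) t₂ →
      ∃ t₁ : List (Atom L),
        Emits AStepP (aInit i) t₁ ∧ List.Forall₂ (matchAtomC CL) t₁ t₂ := by
  intro i ic t₂ hmi hem
  obtain ⟨hp, ha, hs, ht⟩ := hmi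
  obtain ⟨sf, htr⟩ := hem
  obtain ⟨k, htrN⟩ := traces_toN htr
  have hstkinit : ∀ l : List (Atom L), List.Forall₂ (MatchStk CL)
      (l.map StkElt.data)
      ((l.map (fun a => (⟨a.val, CL.Tag a.lab⟩ : CAtom))).map CStkElt.data) := by
    intro l
    induction l with
    | nil => exact .nil
    | cons a l ih => exact .cons (.data rfl) ih
  have hsim : SimRel CL (aInit i).2 (cInit ic).2 := by
    refine ⟨rfl, CInv_init CL, ?_, ?_, ?_⟩
    · intro p
      simp only [aInit, cInit, hs, ht]
      by_cases hq : 0 ≤ p ∧ p < (i.size : ℤ)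
      · rw [if_pos hq, if_pos hq]
        exact .some rfl
      · rw [if_neg hq, if_neg hq]
        exact .none
    · simp only [aInit, cInit, ha]
      exact hstkinit i.args
    · simp only [aInit, cInit, ht]
  have hpair : cInit ic = (i.prog, (cInit ic).2) := by
    rw [← hp]
    rfl
  rw [hpair] at htrN
  obtain ⟨t₁, s', h1, h2⟩ := sim CL k i.prog (aInit i).2 (cInit ic).2 t₂ sf htrN hsim
  exact ⟨t₁, ⟨s', h1⟩, h2⟩
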